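/- arXiv:1912.13097 — 7 statements merged into one kernel-verified Lean document; each statement's English description precedes it below -/
import Mathlib

section
/- Let ψ : X → H be weakly measurable and suppose D(Ψ) = {f ∈ H : ∫_X |⟨f,ψ_x⟩|² dμ(x) < ∞} is dense in H. Then the frame operator S_ψ, weakly defined by ⟨S_ψ f, g⟩ = ∫_X ⟨f,ψ_x⟩⟨ψ_x,g⟩ dμ(x) on its natural domain, is closable, and its closure is dominated by the self-adjoint operator S_Ψ = C_ψ* C_ψ associated to the closed sesquilinear form Ψ(f,g) = ∫_X ⟨f,ψ_x⟩⟨ψ_x,g⟩ dμ(x). -/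
open MeasureTheory Filter Topology LinearPMap
open scoped ComplexInnerProductSpace

noncomputable section FrameAux

variable {E F : Type*} [NormedAddCommGroup E] [InnerProductSpace ℂ E] [CompleteSpace E]
  [NormedAddCommGroup F] [InnerProductSpace ℂ F] [CompleteSpace F]

theorem FrameAux.adjoint_isClosed {T : E →ₗ.[ℂ] F} (hT : Dense (T.domain : Set E)) :
    T.adjoint.IsClosed := by
  have hgraph : (T.adjoint.graph : Set (F × E)) =
      ⋂ (x : T.domain), {p : F × E | (⟪p.2, (x : E)⟫ : ℂ) = ⟪p.1, T x⟫} := by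
    ext ⟨y, z⟩
    simp only [Set.mem_iInter, Set.mem_setOf_eq, SetLike.mem_coe]
    constructor
    · intro h x
      rcases T.adjoint.mem_graph_iff.mp h with ⟨y', hy1, hy2⟩
      have := adjoint_isFormalAdjoint hT y' x
      simp only [hy1, hy2] at this
      exact this
    · intro h
      have hy : y ∈ T.adjoint.domain :=
        mem_adjoint_domain_of_exists _ ⟨z, fun x => h x⟩
      have hz : T.adjoint ⟨y, hy⟩ = z := adjoint_apply_eq hT _ fun x => h x
      have := T.adjoint.mem_graph ⟨y, hy⟩
      rwa [hz] at this
  rw [LinearPMap.IsClosed, hgraph]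
  exact isClosed_iInter fun x => isClosed_eq
    (Continuous.inner continuous_snd continuous_const)
    (Continuous.inner continuous_fst continuous_const)

variable (T : E →ₗ.[ℂ] F)

/-- The composition `T† ∘ T` as a `LinearPMap`. -/
def FrameAux.starComp : E →ₗ.[ℂ] E where
  domain := (Submodule.comap T.toFun T.adjoint.domain).map T.domain.subtype
  toFun := T.adjoint.toFun ∘ₗ (T.toFun.restrict fun _ hx => hx) ∘ₗ
    (Submodule.equivMapOfInjective T.domain.subtype (Submodule.injective_subtype _)
      (Submodule.comap T.toFun T.adjoint.domain)).symm.toLinearMap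

namespace FrameAux

theorem mem_starComp_domain_iff {f : E} :
    f ∈ (starComp T).domain ↔ ∃ hf : f ∈ T.domain, T ⟨f, hf⟩ ∈ T.adjoint.domain := by
  constructor
  · rintro ⟨⟨x, hx⟩, hmem, rfl⟩
    exact ⟨hx, hmem⟩
  · rintro ⟨hf, hmem⟩
    exact ⟨⟨f, hf⟩, hmem, rfl⟩

theorem starComp_apply {f : E} (hf : f ∈ T.domain)
    (hf2 : T ⟨f, hf⟩ ∈ T.adjoint.domain) (hf' : f ∈ (starComp T).domain) :
    starComp T ⟨f, hf'⟩ = T.adjoint ⟨T ⟨f, hf⟩, hf2⟩ := by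
  set e := Submodule.equivMapOfInjective T.domain.subtype (Submodule.injective_subtype _)
    (Submodule.comap T.toFun T.adjoint.domain) with he
  have hy : ((e.symm ⟨f, hf'⟩ : ↥(Submodule.comap T.toFun T.adjoint.domain)) : T.domain)
      = ⟨f, hf⟩ := by
    apply Subtype.ext
    exact Submodule.map_equivMapOfInjective_symm_apply T.domain.subtype
      (Submodule.injective_subtype _) (Submodule.comap T.toFun T.adjoint.domain) ⟨f, hf'⟩
  have harg : (((T.toFun).restrict fun _ hx => hx) (e.symm ⟨f, hf'⟩))
      = (⟨T ⟨f, hf⟩, hf2⟩ : T.adjoint.domain) := by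
    apply Subtype.ext
    rw [LinearMap.restrict_apply]
    show T.toFun ((e.symm ⟨f, hf'⟩ : ↥(Submodule.comap T.toFun T.adjoint.domain)) : T.domain) = _
    rw [hy]
    rfl
  show T.adjoint.toFun (((T.toFun).restrict fun _ hx => hx) (e.symm ⟨f, hf'⟩)) = _
  rw [harg]
  rfl

theorem starComp_isFormalAdjoint (hd : Dense (T.domain : Set E)) :
    (starComp T).IsFormalAdjoint (starComp T) := by
  intro x y
  obtain ⟨hx1, hx2⟩ := (mem_starComp_domain_iff T).mp x.2
  obtain ⟨hy1, hy2⟩ := (mem_starComp_domain_iff T).mp y.2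
  have hxv : starComp T x = T.adjoint ⟨T ⟨(x : E), hx1⟩, hx2⟩ := by
    rw [← starComp_apply T hx1 hx2 x.2]
  have hyv : starComp T y = T.adjoint ⟨T ⟨(y : E), hy1⟩, hy2⟩ := by
    rw [← starComp_apply T hy1 hy2 y.2]
  rw [hxv, hyv]
  have h1 := adjoint_isFormalAdjoint hd ⟨T ⟨(x : E), hx1⟩, hx2⟩ ⟨(y : E), hy1⟩
  have h2 := adjoint_isFormalAdjoint hd ⟨T ⟨(y : E), hy1⟩, hy2⟩ ⟨(x : E), hx1⟩
  rw [h1]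
  conv_rhs => rw [← inner_conj_symm]
  rw [h2, inner_conj_symm]

end FrameAux

section Surj

open FrameAux

variable {T}

theorem FrameAux.starComp_surj (hd : Dense (T.domain : Set E)) (hc : T.IsClosed) (v : E) :
    ∃ a : ↥(starComp T).domain, (a : E) + starComp T a = v := by
  set eL := WithLp.linearEquiv 2 ℂ (E × F) with heL
  set W : Submodule ℂ (WithLp 2 (E × F)) := T.graph.comap (eL : WithLp 2 (E × F) →ₗ[ℂ] E × F)
    with hW
  have hWclosed : IsClosed (W : Set (WithLp 2 (E × F))) := by
    have h1 : (W : Set (WithLp 2 (E × F))) =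
        (WithLp.equiv 2 (E × F)) ⁻¹' (T.graph : Set (E × F)) := rfl
    rw [h1]
    exact hc.preimage (WithLp.prod_continuous_ofLp 2 E F)
  haveI : CompleteSpace W := hWclosed.completeSpace_coe
  obtain ⟨y, hy, z, hz, hvyz⟩ := W.exists_add_mem_mem_orthogonal ((eL.symm (v, 0)))
  obtain ⟨a, ha1, ha2⟩ := T.mem_graph_iff.mp (Submodule.mem_comap.mp hy)
  have ha1' : (a : E) = (eL y).1 := ha1
  have ha2' : T a = (eL y).2 := ha2
  -- orthogonality identity
  have hzo : ∀ x : T.domain, (⟪(x : E), (eL z).1⟫ : ℂ) + ⟪T x, (eL z).2⟫ = 0 := by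
    intro x
    have hxW : eL.symm ((x : E), T x) ∈ W := by
      apply Submodule.mem_comap.mpr
      simpa using T.mem_graph x
    have h0 := (Submodule.mem_orthogonal W z).mp hz _ hxW
    rw [WithLp.prod_inner_apply] at h0
    exact h0
  have hkey : ∀ x : T.domain, (⟪-(eL z).1, (x : E)⟫ : ℂ) = ⟪(eL z).2, T x⟫ := by
    intro x
    have h0c := congrArg (starRingEnd ℂ) (hzo x)
    simp only [_root_.map_add, inner_conj_symm, _root_.map_zero] at h0c
    rw [inner_neg_left]
    linear_combination -h0c
  have hw_mem : (eL z).2 ∈ T.adjoint.domain :=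
    mem_adjoint_domain_of_exists _ ⟨-(eL z).1, hkey⟩
  have hval : T.adjoint ⟨(eL z).2, hw_mem⟩ = -(eL z).1 := adjoint_apply_eq hd _ hkey
  -- components of the decomposition
  have hcomp : (v, (0 : F)) = eL y + eL z := by
    have h0 := congrArg eL hvyz
    rwa [_root_.map_add, LinearEquiv.apply_symm_apply] at h0
  have h1 : v = (a : E) + (eL z).1 := by
    have := congrArg Prod.fst hcomp
    simpa [ha1'] using this
  have h2 : T a = -(eL z).2 := by
    have := congrArg Prod.snd hcomp
    simp only [Prod.snd_add] at this
    rw [← ha2'] at this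
    exact eq_neg_of_add_eq_zero_left this.symm
  have hTa_mem : T a ∈ T.adjoint.domain := by
    rw [h2]; exact Submodule.neg_mem _ hw_mem
  have hTa_val : T.adjoint ⟨T a, hTa_mem⟩ = (eL z).1 := by
    have heq : (⟨T a, hTa_mem⟩ : T.adjoint.domain) = -⟨(eL z).2, hw_mem⟩ :=
      Subtype.ext (by simpa using h2)
    rw [heq]
    show T.adjoint.toFun _ = _
    rw [(T.adjoint.toFun).map_neg]
    have hval' : T.adjoint.toFun ⟨(eL z).2, hw_mem⟩ = -(eL z).1 := hval
    rw [hval', neg_neg]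
  have hdom : (a : E) ∈ (starComp T).domain :=
    (mem_starComp_domain_iff T).mpr ⟨a.2, hTa_mem⟩
  refine ⟨⟨(a : E), hdom⟩, ?_⟩
  rw [starComp_apply T a.2 hTa_mem hdom, hTa_val]
  exact h1.symm

theorem FrameAux.starComp_dense (hd : Dense (T.domain : Set E)) (hc : T.IsClosed) :
    Dense (((starComp T).domain : Set E)) := by
  rw [Submodule.dense_iff_topologicalClosure_eq_top,
    Submodule.topologicalClosure_eq_top_iff]
  rw [Submodule.eq_bot_iff]
  intro g hg
  obtain ⟨a, ha⟩ := starComp_surj hd hc g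
  obtain ⟨ha1, ha2⟩ := (mem_starComp_domain_iff T).mp a.2
  have h0 : (⟪(a : E), g⟫ : ℂ) = 0 := hg _ a.2
  rw [← ha, inner_add_right] at h0
  have hv : starComp T a = T.adjoint ⟨T ⟨(a : E), ha1⟩, ha2⟩ := by
    rw [← starComp_apply T ha1 ha2 a.2]
  have hinner : (⟪(a : E), starComp T a⟫ : ℂ) = ⟪T ⟨(a : E), ha1⟩, T ⟨(a : E), ha1⟩⟫ := by
    rw [hv, ← inner_conj_symm]
    rw [adjoint_isFormalAdjoint hd ⟨T ⟨(a : E), ha1⟩, ha2⟩ ⟨(a : E), ha1⟩]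
    rw [inner_conj_symm]
  rw [hinner] at h0
  have hre2 : ‖(a : E)‖ ^ 2 + ‖T ⟨(a : E), ha1⟩‖ ^ 2 = 0 := by
    have := congrArg Complex.re h0
    simpa [inner_self_eq_norm_sq_to_K, ← Complex.ofReal_pow, Complex.add_re,
      Complex.ofReal_re, Complex.zero_re] using this
  have ha0 : (a : E) = 0 := by
    have h3 : ‖(a : E)‖ ^ 2 = 0 := by
      nlinarith [sq_nonneg ‖(a : E)‖, sq_nonneg ‖T ⟨(a : E), ha1⟩‖]
    simpa using pow_eq_zero_iff (n := 2) (by norm_num) |>.mp h3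
  have haz : a = 0 := Subtype.ext ha0
  have : starComp T a = 0 := by
    rw [haz]
    exact _root_.map_zero (starComp T).toFun
  rw [← ha, ha0, this, add_zero]

theorem FrameAux.closure_eq_self_of_isClosed {f : E →ₗ.[ℂ] F} (hf : f.IsClosed) :
    f.closure = f := by
  refine le_antisymm (le_of_le_graph ?_) f.le_closure
  rw [← hf.isClosable.graph_closure_eq_closure_graph]
  exact f.graph.topologicalClosure_minimal le_rfl hf

theorem FrameAux.starComp_selfAdjoint (hd : Dense (T.domain : Set E)) (hc : T.IsClosed) :
    (starComp T).adjoint = starComp T := by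
  have hdS := starComp_dense hd hc
  have h1 : starComp T ≤ (starComp T).adjoint :=
    (starComp_isFormalAdjoint T hd).le_adjoint hdS
  have key : ∀ y : (starComp T).adjoint.domain,
      ∃ hy : (y : E) ∈ (starComp T).domain,
        starComp T ⟨(y : E), hy⟩ = (starComp T).adjoint y := by
    intro y
    set z := (starComp T).adjoint y with hz
    obtain ⟨a, ha⟩ := starComp_surj hd hc ((y : E) + z)
    have hsym := starComp_isFormalAdjoint T hd
    have key0 : ∀ x : (starComp T).domain,
        (⟪(x : E), (y : E) - (a : E)⟫ : ℂ) + ⟪starComp T x, (y : E) - (a : E)⟫ = 0 := by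
      intro x
      have hadj := adjoint_isFormalAdjoint hdS y x
      have h4 : (⟪starComp T x, (y : E)⟫ : ℂ) = ⟪(x : E), z⟫ := by
        have h4' := congrArg (starRingEnd ℂ) hadj
        simp only [inner_conj_symm] at h4'
        exact h4'.symm
      have h5 : (⟪starComp T x, (a : E)⟫ : ℂ) = ⟪(x : E), starComp T a⟫ := hsym x a
      have h6 := congrArg (fun w => (⟪(x : E), w⟫ : ℂ)) ha
      simp only [inner_add_right] at h6
      rw [inner_sub_right, inner_sub_right, h4, h5]
      linear_combination -h6
    obtain ⟨x0, hx0⟩ := starComp_surj hd hc ((y : E) - (a : E))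
    have h7 := key0 x0
    rw [← inner_add_left, hx0] at h7
    have h9 : (y : E) = (a : E) := sub_eq_zero.mp (inner_self_eq_zero.mp h7)
    have hy : (y : E) ∈ (starComp T).domain := by rw [h9]; exact a.2
    refine ⟨hy, ?_⟩
    have hya : (⟨(y : E), hy⟩ : ↥(starComp T).domain) = a := Subtype.ext h9
    have hSa : starComp T a = z := by
      rw [← h9] at ha
      exact add_left_cancel ha
    rw [hya, hSa]
  have h2 : (starComp T).adjoint ≤ starComp T := by
    refine ⟨fun u hu => (key ⟨u, hu⟩).1, ?_⟩
    intro x y hxy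
    obtain ⟨hx2, hval⟩ := key x
    rw [← hval]
    exact congrArg (fun t => starComp T t) (Subtype.ext hxy)
  exact le_antisymm h2 h1

end Surj

end FrameAux

/-- If `D(Ψ) = {f : ∫ ‖⟨f, ψ x⟩‖² dμ < ∞}` is dense, then the frame operator `S_ψ`
(weakly defined by `⟨S_ψ f, g⟩ = ∫ ⟨f, ψ x⟩⟨ψ x, g⟩ dμ` on its natural domain) is
closable, and its closure is dominated by (i.e. is a restriction of) a self-adjoint
operator `S_Ψ` associated to the closed form `Ψ(f, g) = ∫ ⟨f, ψ x⟩⟨ψ x, g⟩ dμ`.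
Paper inner products `⟨·,·⟩` (linear in the first entry) are rendered as
`⟪·,·⟫` with arguments swapped. -/
theorem frame_operator_closable
    {H : Type*} [NormedAddCommGroup H] [InnerProductSpace ℂ H] [CompleteSpace H]
    {X : Type*} [MeasurableSpace X] (μ : Measure X) [SigmaFinite μ]
    (ψ : X → H)
    (hmeas : ∀ f : H, Measurable fun x => (⟪f, ψ x⟫ : ℂ))
    (hdense : Dense {f : H | MemLp (fun x => (⟪ψ x, f⟫ : ℂ)) 2 μ})
    (Sψ : H →ₗ.[ℂ] H)
    (hSdom : ∀ f : H, f ∈ Sψ.domain ↔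
      ∃ h : H, ∀ g : H,
        Integrable (fun x => (⟪ψ x, f⟫ : ℂ) * (⟪g, ψ x⟫ : ℂ)) μ ∧
        (⟪g, h⟫ : ℂ) = ∫ x, (⟪ψ x, f⟫ : ℂ) * (⟪g, ψ x⟫ : ℂ) ∂μ)
    (hSval : ∀ f : Sψ.domain, ∀ g : H,
      (⟪g, Sψ f⟫ : ℂ) = ∫ x, (⟪ψ x, (f : H)⟫ : ℂ) * (⟪g, ψ x⟫ : ℂ) ∂μ) :
    Sψ.IsClosable ∧
      ∃ SΨ : H →ₗ.[ℂ] H,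
        SΨ.adjoint = SΨ ∧
        (∀ f : SΨ.domain, MemLp (fun x => (⟪ψ x, (f : H)⟫ : ℂ)) 2 μ) ∧
        (∀ f : SΨ.domain, ∀ g : H, MemLp (fun x => (⟪ψ x, g⟫ : ℂ)) 2 μ →
          (⟪g, SΨ f⟫ : ℂ) = ∫ x, (⟪ψ x, (f : H)⟫ : ℂ) * (⟪g, ψ x⟫ : ℂ) ∂μ) ∧
        Sψ.closure ≤ SΨ := by
  classical
  haveI : Fact ((1 : ENNReal) ≤ 2) := ⟨one_le_two⟩
  -- measurability of the conjugate inner products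
  have hmeas' : ∀ f : H, AEStronglyMeasurable (fun x => (⟪ψ x, f⟫ : ℂ)) μ := by
    intro f
    have heq : (fun x => (⟪ψ x, f⟫ : ℂ)) = fun x => (starRingEnd ℂ) (⟪f, ψ x⟫ : ℂ) := by
      funext x; rw [inner_conj_symm]
    rw [heq]
    exact ((RCLike.continuous_conj.measurable).comp (hmeas f)).aestronglyMeasurable
  -- the form domain as a submodule
  set D : Submodule ℂ H :=
    { carrier := {f : H | MemLp (fun x => (⟪ψ x, f⟫ : ℂ)) 2 μ}
      add_mem' := by
        intro a b ha hb
        have heq : (fun x => (⟪ψ x, a + b⟫ : ℂ))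
            = fun x => (⟪ψ x, a⟫ : ℂ) + (⟪ψ x, b⟫ : ℂ) := by
          funext x; rw [inner_add_right]
        show MemLp _ 2 μ
        rw [heq]
        exact ha.add hb
      zero_mem' := by
        show MemLp _ 2 μ
        have heq : (fun x => (⟪ψ x, (0 : H)⟫ : ℂ)) = fun _ => (0 : ℂ) := by
          funext x; rw [inner_zero_right]
        rw [heq]
        exact MemLp.zero'
      smul_mem' := by
        intro c f hf
        have heq : (fun x => (⟪ψ x, c • f⟫ : ℂ)) = fun x => c • (⟪ψ x, f⟫ : ℂ) := by
          funext x; rw [inner_smul_right]; rfl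
        show MemLp _ 2 μ
        rw [heq]
        exact hf.const_smul c } with hD
  have hmemD : ∀ f : ↥D, MemLp (fun x => (⟪ψ x, (f : H)⟫ : ℂ)) 2 μ := fun f => f.2
  -- the analysis operator
  set L : ↥D →ₗ[ℂ] Lp ℂ 2 μ :=
    { toFun := fun f => MemLp.toLp (fun x => (⟪ψ x, (f : H)⟫ : ℂ)) (hmemD f)
      map_add' := by
        intro a b
        apply Lp.ext
        filter_upwards [MemLp.coeFn_toLp (hmemD (a + b)), MemLp.coeFn_toLp (hmemD a),
          MemLp.coeFn_toLp (hmemD b),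
          Lp.coeFn_add (MemLp.toLp _ (hmemD a)) (MemLp.toLp _ (hmemD b))] with x h1 h2 h3 h4
        rw [h1, h4, Pi.add_apply, h2, h3, Submodule.coe_add, inner_add_right]
      map_smul' := by
        intro c a
        apply Lp.ext
        filter_upwards [MemLp.coeFn_toLp (hmemD (c • a)), MemLp.coeFn_toLp (hmemD a),
          Lp.coeFn_smul c (MemLp.toLp _ (hmemD a))] with x h1 h2 h3
        rw [h1, RingHom.id_apply, h3, Pi.smul_apply, h2, Submodule.coe_smul, inner_smul_right]
        rfl } with hL
  set C : H →ₗ.[ℂ] Lp ℂ 2 μ := ⟨D, L⟩ with hC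
  have hCdense : Dense (C.domain : Set H) := hdense
  have hcoeL : ∀ f : ↥D, ⇑(L f) =ᵐ[μ] fun x => (⟪ψ x, (f : H)⟫ : ℂ) :=
    fun f => MemLp.coeFn_toLp (hmemD f)
  -- the basic inner-product identity
  have hCinner : ∀ (f g : ↥D), (⟪L g, L f⟫ : ℂ)
      = ∫ x, (⟪ψ x, (f : H)⟫ : ℂ) * (⟪(g : H), ψ x⟫ : ℂ) ∂μ := by
    intro f g
    rw [L2.inner_def]
    apply integral_congr_ae
    filter_upwards [hcoeL f, hcoeL g] with x h1 h2
    rw [RCLike.inner_apply, h1, h2, ← inner_conj_symm ((g : H)) (ψ x)]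
  -- the analysis operator is closed
  have hCclosed : C.IsClosed := by
    rw [LinearPMap.IsClosed]
    set_option synthInstance.maxHeartbeats 1000000 in
    apply IsSeqClosed.isClosed
    rintro seq ⟨f, u⟩ hseq hlim
    choose w hw1 hw2 using fun n => C.mem_graph_iff.mp (hseq n)
    have hfst : Tendsto (fun n => (seq n).1) atTop (𝓝 f) :=
      (continuous_fst.tendsto _).comp hlim
    have hsnd : Tendsto (fun n => L (w n)) atTop (𝓝 u) := by
      have : (fun n => L (w n)) = fun n => (seq n).2 := funext fun n => hw2 n
      rw [this]
      exact (continuous_snd.tendsto _).comp hlim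
    have hmeas2 : TendstoInMeasure μ (fun n => ⇑(L (w n))) atTop ⇑u :=
      tendstoInMeasure_of_tendsto_Lp hsnd
    obtain ⟨ns, hns, hae⟩ := hmeas2.exists_seq_tendsto_ae
    have hcoe : ∀ᵐ x ∂μ, ∀ n, (L (w n)) x = (⟪ψ x, ((w n : H))⟫ : ℂ) :=
      ae_all_iff.mpr fun n => hcoeL (w n)
    have haeq : (fun x => (⟪ψ x, f⟫ : ℂ)) =ᵐ[μ] ⇑u := by
      filter_upwards [hae, hcoe] with x h1 h2
      have hpt : Tendsto (fun n => (⟪ψ x, (seq n).1⟫ : ℂ)) atTop (𝓝 ⟪ψ x, f⟫) :=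
        Tendsto.inner tendsto_const_nhds hfst
      have hpt2 : Tendsto (fun i => (⟪ψ x, (seq (ns i)).1⟫ : ℂ)) atTop (𝓝 ⟪ψ x, f⟫) :=
        hpt.comp hns.tendsto_atTop
      have hpt3 : Tendsto (fun i => (L (w (ns i))) x) atTop (𝓝 ⟪ψ x, f⟫) := by
        have : (fun i => (L (w (ns i))) x) = fun i => (⟪ψ x, (seq (ns i)).1⟫ : ℂ) := by
          funext i; rw [h2 (ns i), hw1 (ns i)]
        rw [this]
        exact hpt2
      exact tendsto_nhds_unique hpt3 h1
    have hfD : f ∈ D := (Lp.memLp u).ae_eq haeq.symm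
    exact C.mem_graph_iff.mpr ⟨⟨f, hfD⟩, rfl, Lp.ext ((hcoeL ⟨f, hfD⟩).trans haeq)⟩
  -- the domain of Sψ is included in D
  have hSψ_subD : ∀ a : H, a ∈ Sψ.domain → a ∈ D := by
    intro a haS
    obtain ⟨h, hh⟩ := (hSdom a).mp haS
    have hint := (hh a).1
    show MemLp _ 2 μ
    rw [memLp_two_iff_integrable_sq_norm (hmeas' a)]
    have h2 : Integrable (fun x => (⟪ψ x, a⟫ : ℂ) * (starRingEnd ℂ) (⟪ψ x, a⟫ : ℂ)) μ := by
      have heq : (fun x => (⟪ψ x, a⟫ : ℂ) * (⟪a, ψ x⟫ : ℂ))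
          = fun x => (⟪ψ x, a⟫ : ℂ) * (starRingEnd ℂ) (⟪ψ x, a⟫ : ℂ) := by
        funext x
        rw [← inner_conj_symm a (ψ x)]
      rw [← heq]
      exact hint
    have h3 := h2.re
    have heq2 : (fun x => RCLike.re ((⟪ψ x, a⟫ : ℂ) * (starRingEnd ℂ) (⟪ψ x, a⟫ : ℂ)))
        = fun x => ‖(⟪ψ x, a⟫ : ℂ)‖ ^ 2 := by
      funext x
      rw [RCLike.mul_conj, ← RCLike.ofReal_pow, RCLike.ofReal_re]
    rwa [heq2] at h3
  -- key adjoint identity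
  have hkey2 : ∀ (f : ↥Sψ.domain) (hfD : (f : H) ∈ D) (x : ↥C.domain),
      (⟪(Sψ f : H), (x : H)⟫ : ℂ) = ⟪L ⟨(f : H), hfD⟩, L x⟫ := by
    intro f hfD x
    rw [hCinner x ⟨(f : H), hfD⟩, ← inner_conj_symm, hSval f (x : H), ← integral_conj]
    refine integral_congr_ae (Filter.Eventually.of_forall fun y => ?_)
    simp only [map_mul, inner_conj_symm]
    ring
  -- the key domination fact
  have keyle : ∀ f : ↥Sψ.domain, ∃ hx : (f : H) ∈ (FrameAux.starComp C).domain,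
      FrameAux.starComp C ⟨(f : H), hx⟩ = Sψ f := by
    intro f
    have hfD : (f : H) ∈ D := hSψ_subD _ f.2
    have hmemadj : L ⟨(f : H), hfD⟩ ∈ C.adjoint.domain :=
      LinearPMap.mem_adjoint_domain_of_exists _ ⟨Sψ f, fun x => hkey2 f hfD x⟩
    have hx : (f : H) ∈ (FrameAux.starComp C).domain :=
      (FrameAux.mem_starComp_domain_iff C).mpr ⟨hfD, hmemadj⟩
    refine ⟨hx, ?_⟩
    rw [FrameAux.starComp_apply C hfD hmemadj hx]
    exact LinearPMap.adjoint_apply_eq hCdense _ (fun x => hkey2 f hfD x)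
  have hle : Sψ ≤ FrameAux.starComp C := by
    refine ⟨fun a ha => (keyle ⟨a, ha⟩).1, ?_⟩
    intro x y hxy
    obtain ⟨hx, hval⟩ := keyle x
    rw [← hval]
    have hxyeq : (⟨(x : H), hx⟩ : ↥(FrameAux.starComp C).domain) = y := Subtype.ext hxy
    rw [hxyeq]
  have hSA := FrameAux.starComp_selfAdjoint (T := C) hCdense hCclosed
  have hclosed : (FrameAux.starComp C).IsClosed := by
    rw [← hSA]
    exact FrameAux.adjoint_isClosed (FrameAux.starComp_dense hCdense hCclosed)
  refine ⟨hclosed.isClosable.leIsClosable hle, FrameAux.starComp C, hSA, ?_, ?_, ?_⟩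
  · intro f
    obtain ⟨hfD, -⟩ := (FrameAux.mem_starComp_domain_iff C).mp f.2
    exact hfD
  · intro f g hg
    obtain ⟨hfD, hmem⟩ := (FrameAux.mem_starComp_domain_iff C).mp f.2
    have hgD : g ∈ D := hg
    have hv : (FrameAux.starComp C f : H) = C.adjoint ⟨C ⟨(f : H), hfD⟩, hmem⟩ := by
      rw [← FrameAux.starComp_apply C hfD hmem f.2]
    rw [hv, ← inner_conj_symm,
      LinearPMap.adjoint_isFormalAdjoint hCdense ⟨C ⟨(f : H), hfD⟩, hmem⟩ ⟨g, hgD⟩]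
    have : (⟪(C ⟨(f : H), hfD⟩ : Lp ℂ 2 μ), C ⟨g, hgD⟩⟫ : ℂ)
        = ∫ x, (⟪ψ x, g⟫ : ℂ) * (⟪(f : H), ψ x⟫ : ℂ) ∂μ := hCinner ⟨g, hgD⟩ ⟨(f : H), hfD⟩
    rw [this, ← integral_conj]
    refine integral_congr_ae (Filter.Eventually.of_forall fun y => ?_)
    simp only [map_mul, inner_conj_symm]
    ring
  · have hmono := hclosed.isClosable.closure_mono hle
    rwa [FrameAux.closure_eq_self_of_isClosed hclosed] at hmono
end

section
/- Let H₁, H₂, H be Hilbert spaces, T₁ : D(T₁) ⊆ H₁ → H densely defined and closed, T₂ : D(T₂) ⊆ H → H₂ densely defined, with D(T₁*) = D(T₂). If ‖T₁* f‖ ≤ λ‖T₂ f‖ for all f ∈ D(T₁*) and some λ > 0, then there exists a bounded operator U ∈ B(H₁, H₂) such that T₁ = T₂* U. -/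
open MeasureTheory Filter Topology
open scoped ComplexInnerProductSpace

/-- Composition `T ∘ M` of a partially defined operator `T` with an everywhere defined
bounded operator `M`, with domain `{f : M f ∈ D(T)}`. -/
noncomputable def LinearPMap.compCLM {E F G : Type*}
    [NormedAddCommGroup E] [NormedAddCommGroup F] [NormedAddCommGroup G]
    [NormedSpace ℂ E] [NormedSpace ℂ F] [NormedSpace ℂ G]
    (T : F →ₗ.[ℂ] G) (M : E →L[ℂ] F) : E →ₗ.[ℂ] G where
  domain := T.domain.comap (M : E →ₗ[ℂ] F)
  toFun := T.toFun.comp ((M : E →ₗ[ℂ] F).restrict fun _ hx => hx)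

/-- The range of the inclusion of a submodule into its topological closure is dense. -/
theorem aux_denseRange_inclusion {M : Type*} [NormedAddCommGroup M] [NormedSpace ℂ M]
    (s : Submodule ℂ M) :
    DenseRange (Submodule.inclusion s.le_topologicalClosure) := by
  refine IsInducing.subtypeVal.dense_iff.2 fun x => ?_
  convert show (x : M) ∈ closure (s : Set M) from x.prop
  rw [← Set.range_comp]
  exact Set.ext fun y =>
    ⟨by rintro ⟨y, rfl⟩; exact y.prop, fun hy => ⟨⟨y, hy⟩, rfl⟩⟩

/-- A fragment of von Neumann's theorem on the double adjoint: if `T₁` is densely defined and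
closed and `(u, w)` is "in the graph of `T₁**`", then `(u, w)` is in the graph of `T₁`. -/
theorem aux_mem_graph {H₁ H : Type*}
    [NormedAddCommGroup H] [InnerProductSpace ℂ H] [CompleteSpace H]
    [NormedAddCommGroup H₁] [InnerProductSpace ℂ H₁] [CompleteSpace H₁]
    (T₁ : H₁ →ₗ.[ℂ] H) (hdense : Dense (T₁.domain : Set H₁)) (hclosed : T₁.IsClosed)
    (u : H₁) (w : H)
    (h : ∀ v : T₁.adjoint.domain, ⟪T₁.adjoint v, u⟫ = ⟪(v : H), w⟫) :
    (u, w) ∈ T₁.graph := by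
  set E := WithLp 2 (H₁ × H)
  let e : E ≃L[ℂ] H₁ × H := WithLp.prodContinuousLinearEquiv 2 ℂ H₁ H
  let Γ : Submodule ℂ E := T₁.graph.comap (e.toLinearEquiv : E →ₗ[ℂ] H₁ × H)
  have hΓc : IsClosed (Γ : Set E) := by
    have : (Γ : Set E) = ⇑e ⁻¹' (T₁.graph : Set (H₁ × H)) := rfl
    rw [this]; exact hclosed.preimage e.continuous
  have key : e.symm (u, w) ∈ Γ := by
    have hoo : Γᗮᗮ = Γ := by
      rw [Submodule.orthogonal_orthogonal_eq_closure, hΓc.submodule_topologicalClosure_eq]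
    rw [← hoo, Submodule.mem_orthogonal]
    intro z hz
    set a : H₁ := z.fst with ha
    set b : H := z.snd with hb
    have horth : ∀ x : T₁.domain, ⟪(x : H₁), a⟫ + ⟪T₁ x, b⟫ = 0 := by
      intro x
      have hx : e.symm ((x : H₁), T₁ x) ∈ Γ := by
        show e.toLinearEquiv (e.symm _) ∈ T₁.graph
        simpa using T₁.mem_graph x
      have := hz _ hx
      rwa [WithLp.prod_inner_apply] at this
    have hadj : ∀ x : T₁.domain, ⟪(-a : H₁), (x : H₁)⟫ = ⟪b, T₁ x⟫ := by
      intro x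
      have h1 := horth x
      have : ⟪T₁ x, b⟫ = -⟪(x : H₁), a⟫ := by linear_combination h1
      rw [inner_neg_left, ← inner_conj_symm b (T₁ x), this, ← inner_conj_symm a (x : H₁)]
      simp
    have hbmem : b ∈ T₁.adjoint.domain :=
      LinearPMap.mem_adjoint_domain_of_exists b ⟨-a, hadj⟩
    have hval : T₁.adjoint ⟨b, hbmem⟩ = -a :=
      LinearPMap.adjoint_apply_eq hdense ⟨b, hbmem⟩ hadj
    have hw := h ⟨b, hbmem⟩
    rw [hval] at hw
    rw [inner_neg_left] at hw
    rw [WithLp.prod_inner_apply]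
    have hw' : -⟪a, u⟫ = ⟪b, w⟫ := hw
    show ⟪a, u⟫ + ⟪b, w⟫ = 0
    linear_combination -hw'
  have : e.toLinearEquiv (e.symm (u, w)) ∈ T₁.graph := key
  simpa using this

/-- Unbounded Douglas majorization: if `T₁ : D(T₁) ⊆ H₁ → H` is densely defined and
closed, `T₂ : D(T₂) ⊆ H → H₂` is densely defined, `D(T₁*) = D(T₂)`, and
`‖T₁* f‖ ≤ λ ‖T₂ f‖` for all `f ∈ D(T₁*)` and some `λ > 0`, then there is a bounded
`U ∈ B(H₁, H₂)` with `T₁ = T₂* U` (including equality of domains). -/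
theorem douglas_unbounded
    {H H₁ H₂ : Type*}
    [NormedAddCommGroup H] [InnerProductSpace ℂ H] [CompleteSpace H]
    [NormedAddCommGroup H₁] [InnerProductSpace ℂ H₁] [CompleteSpace H₁]
    [NormedAddCommGroup H₂] [InnerProductSpace ℂ H₂] [CompleteSpace H₂]
    (T₁ : H₁ →ₗ.[ℂ] H) (T₂ : H →ₗ.[ℂ] H₂)
    (hT₁dense : Dense (T₁.domain : Set H₁)) (hT₁closed : T₁.IsClosed)
    (hT₂dense : Dense (T₂.domain : Set H))
    (hdom : T₁.adjoint.domain = T₂.domain)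
    (lam : ℝ) (hlam : 0 < lam)
    (hbound : ∀ (f : H) (hf₁ : f ∈ T₁.adjoint.domain) (hf₂ : f ∈ T₂.domain),
      ‖T₁.adjoint ⟨f, hf₁⟩‖ ≤ lam * ‖T₂ ⟨f, hf₂⟩‖) :
    ∃ U : H₁ →L[ℂ] H₂, T₁ = T₂.adjoint.compCLM U := by
  classical
  -- notation
  have hmem : ∀ f : T₂.domain, (f : H) ∈ T₁.adjoint.domain := fun f => hdom.symm ▸ f.2
  let A : T₂.domain →ₗ[ℂ] H₁ :=
    T₁.adjoint.toFun.comp (LinearEquiv.ofEq _ _ hdom.symm).toLinearMap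
  let G : T₂.domain →ₗ[ℂ] H₂ := T₂.toFun
  have hAval : ∀ f : T₂.domain, A f = T₁.adjoint ⟨(f : H), hmem f⟩ := fun f => rfl
  have hGval : ∀ f : T₂.domain, G f = T₂ f := fun f => rfl
  have hA : ∀ f : T₂.domain, ‖A f‖ ≤ lam * ‖G f‖ := fun f => by
    rw [hAval, hGval]; exact hbound f (hmem f) f.2
  have hker : LinearMap.ker G ≤ LinearMap.ker A := by
    intro f hf
    rw [LinearMap.mem_ker] at hf ⊢
    have := hA f
    rw [hf, norm_zero, mul_zero] at this
    exact norm_le_zero_iff.mp this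
  -- the bounded map `V₀` on the range of `G`
  let V₀ : LinearMap.range G →ₗ[ℂ] H₁ :=
    ((LinearMap.ker G).liftQ A hker).comp (G.quotKerEquivRange.symm : _ →ₗ[ℂ] _)
  have hV₀ : ∀ f : T₂.domain, ∀ hf : G f ∈ LinearMap.range G, V₀ ⟨G f, hf⟩ = A f := by
    intro f hf
    show ((LinearMap.ker G).liftQ A hker) (G.quotKerEquivRange.symm ⟨G f, hf⟩) = A f
    rw [LinearMap.quotKerEquivRange_symm_apply_image]
    rfl
  have hV₀n : ∀ y : LinearMap.range G, ‖V₀ y‖ ≤ lam * ‖y‖ := by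
    rintro ⟨y, hy⟩
    obtain ⟨f, rfl⟩ := hy
    exact (congrArg norm (hV₀ f _)).trans_le (hA f)
  let V₁ : LinearMap.range G →L[ℂ] H₁ := V₀.mkContinuous lam hV₀n
  -- extend to the closure `K` of the range of `G`
  set K := (LinearMap.range G).topologicalClosure with hK
  have hisom : Isometry (Submodule.inclusion (LinearMap.range G).le_topologicalClosure) :=
    fun x y => rfl
  let e : LinearMap.range G →L[ℂ] K :=
    ⟨Submodule.inclusion (LinearMap.range G).le_topologicalClosure, hisom.continuous⟩
  have hdr : DenseRange e := aux_denseRange_inclusion _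
  have hui : IsUniformInducing e := hisom.isUniformInducing
  let W : K →L[ℂ] H₁ := V₁.extend e
  have hW : ∀ y : LinearMap.range G, W (e y) = V₁ y := fun y =>
    ContinuousLinearMap.extend_eq V₁ hdr hui y
  let U : H₁ →L[ℂ] H₂ := K.subtypeL.comp (ContinuousLinearMap.adjoint W)
  -- the key inner-product identity
  have hGK : ∀ f : T₂.domain, T₂ f ∈ K :=
    fun f => (LinearMap.range G).le_topologicalClosure ⟨f, rfl⟩
  have key : ∀ (x : H₁) (f : T₂.domain), ⟪U x, T₂ f⟫ = ⟪x, A f⟫ := by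
    intro x f
    have h1 : (⟨T₂ f, hGK f⟩ : K) = e ⟨G f, LinearMap.mem_range_self G f⟩ := rfl
    have h2 : ⟪U x, T₂ f⟫ = ⟪(ContinuousLinearMap.adjoint W) x, (⟨T₂ f, hGK f⟩ : K)⟫ := rfl
    rw [h2, h1, ContinuousLinearMap.adjoint_inner_left, hW]
    congr 1
    exact hV₀ f _
  -- forward direction data
  have hfwd : ∀ (x : H₁) (hx : x ∈ T₁.domain) (f : T₂.domain),
      ⟪T₁ ⟨x, hx⟩, (f : H)⟫ = ⟪U x, T₂ f⟫ := by
    intro x hx f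
    rw [key x f, hAval]
    have this' : ⟪T₁.adjoint ⟨(f : H), hmem f⟩, x⟫ = ⟪(f : H), T₁ ⟨x, hx⟩⟫ :=
      LinearPMap.adjoint_isFormalAdjoint hT₁dense ⟨(f : H), hmem f⟩ ⟨x, hx⟩
    rw [← inner_conj_symm x, this', inner_conj_symm]
  have hfwd_mem : ∀ (x : H₁), x ∈ T₁.domain → U x ∈ T₂.adjoint.domain := by
    intro x hx
    exact LinearPMap.mem_adjoint_domain_of_exists (U x) ⟨T₁ ⟨x, hx⟩, hfwd x hx⟩
  refine ⟨U, ?_⟩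
  have hdomeq : T₁.domain = (T₂.adjoint.compCLM U).domain := by
    ext x
    show x ∈ T₁.domain ↔ U x ∈ T₂.adjoint.domain
    constructor
    · exact hfwd_mem x
    · intro hx
      set w := T₂.adjoint ⟨U x, hx⟩ with hwdef
      have hforall : ∀ v : T₁.adjoint.domain, ⟪T₁.adjoint v, x⟫ = ⟪(v : H), w⟫ := by
        intro v
        have hv₂ : (v : H) ∈ T₂.domain := hdom ▸ v.2
        let f : T₂.domain := ⟨(v : H), hv₂⟩
        have hAv : A f = T₁.adjoint v := by
          rw [hAval]
        have h4 : ⟪w, (f : H)⟫ = ⟪U x, T₂ f⟫ :=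
          LinearPMap.adjoint_isFormalAdjoint hT₂dense ⟨U x, hx⟩ f
        calc ⟪T₁.adjoint v, x⟫ = (starRingEnd ℂ) ⟪x, T₁.adjoint v⟫ := (inner_conj_symm _ _).symm
          _ = (starRingEnd ℂ) ⟪x, A f⟫ := by rw [hAv]
          _ = (starRingEnd ℂ) ⟪U x, T₂ f⟫ := by rw [key]
          _ = (starRingEnd ℂ) ⟪w, (f : H)⟫ := by rw [h4]
          _ = ⟪(f : H), w⟫ := inner_conj_symm _ _
          _ = ⟪(v : H), w⟫ := rfl
      have hg : (x, w) ∈ T₁.graph := aux_mem_graph T₁ hT₁dense hT₁closed x w hforall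
      rw [LinearPMap.mem_graph_iff] at hg
      obtain ⟨y, hy, -⟩ := hg
      have hy' : (y : H₁) = x := hy
      rw [← hy']; exact y.2
  refine LinearPMap.dExt hdomeq ?_
  intro x y hxy
  have hy : U (y : H₁) ∈ T₂.adjoint.domain := y.2
  show T₁ x = T₂.adjoint ⟨U (y : H₁), hy⟩
  refine (LinearPMap.adjoint_apply_eq hT₂dense ⟨U (y : H₁), hy⟩ ?_).symm
  intro f
  have hx' : (y : H₁) ∈ T₁.domain := hxy ▸ x.2
  have hxx : x = ⟨(y : H₁), hx'⟩ := Subtype.ext hxy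
  rw [hxx]
  exact hfwd (y : H₁) hx' f
end

section
/- Let (X,μ) be a σ-finite measure space with a countable covering by disjoint measurable sets of finite positive measure, H a separable Hilbert space, and A a densely defined operator on H. Then there exists a continuous weak atomic system for A; concretely, taking an orthonormal basis {e_n} ⊂ D(A) and setting ψ_x = Ae_n/√(μ(X_n)) for x ∈ X_n, the function ψ satisfies: ∫_X |⟨f,ψ_x⟩|² dμ(x) = ‖A*f‖² < ∞ for all f ∈ D(A*), and for all f ∈ D(A) there is a_f ∈ L²(X,μ) with ‖a_f‖₂ = ‖f‖ and ⟨Af,u⟩ = ∫_X a_f(x)⟨ψ_x,u⟩ dμ(x) for all u ∈ D(A*). -/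
open MeasureTheory Filter Topology
open scoped ComplexInnerProductSpace ENNReal

section Aux

variable {X : Type*} [MeasurableSpace X] {μ : Measure X} {Xn : ℕ → Set X}

lemma step_lintegral_aux (hXnmeas : ∀ n, MeasurableSet (Xn n))
    (hXndisj : Pairwise (Function.onFun Disjoint Xn))
    (hXncover : (⋃ n, Xn n) = Set.univ)
    {c : ℕ → ℂ} {F : X → ℂ} (hF : ∀ n, ∀ x ∈ Xn n, F x = c n) :
    ∫⁻ x, (‖F x‖₊ : ℝ≥0∞) ^ 2 ∂μ = ∑' n, μ (Xn n) * (‖c n‖₊ : ℝ≥0∞) ^ 2 := by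
  have h0 : ∫⁻ x, (‖F x‖₊ : ℝ≥0∞) ^ 2 ∂μ
      = ∫⁻ x in ⋃ n, Xn n, (‖F x‖₊ : ℝ≥0∞) ^ 2 ∂μ := by
    rw [hXncover, Measure.restrict_univ]
  rw [h0, lintegral_iUnion hXnmeas hXndisj]
  refine tsum_congr fun n => ?_
  rw [setLIntegral_congr_fun (hXnmeas n)
    ((fun x hx => by rw [hF n x hx] : ∀ x, x ∈ Xn n →
      (‖F x‖₊ : ℝ≥0∞) ^ 2 = (fun _ => (‖c n‖₊ : ℝ≥0∞) ^ 2) x)),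
    setLIntegral_const, mul_comm]

lemma step_integral_aux (hXnmeas : ∀ n, MeasurableSet (Xn n))
    (hXndisj : Pairwise (Function.onFun Disjoint Xn))
    (hXncover : (⋃ n, Xn n) = Set.univ)
    {c : ℕ → ℂ} {F : X → ℂ} (hF : ∀ n, ∀ x ∈ Xn n, F x = c n)
    (hint : Integrable F μ) :
    ∫ x, F x ∂μ = ∑' n, (μ (Xn n)).toReal • c n := by
  have h0 : ∫ x, F x ∂μ = ∫ x in ⋃ n, Xn n, F x ∂μ := by
    rw [hXncover, Measure.restrict_univ]
  rw [h0, integral_iUnion hXnmeas hXndisj (by rw [hXncover]; exact hint.integrableOn)]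
  refine tsum_congr fun n => ?_
  rw [setIntegral_congr_fun (hXnmeas n) (fun x hx => hF n x hx), setIntegral_const]
  rfl

lemma step_memℒp_and_integral_aux (hXnmeas : ∀ n, MeasurableSet (Xn n))
    (hXndisj : Pairwise (Function.onFun Disjoint Xn))
    (hXncover : (⋃ n, Xn n) = Set.univ)
    {c : ℕ → ℂ} {F : X → ℂ} (hF : ∀ n, ∀ x ∈ Xn n, F x = c n)
    (hmF : Measurable F) {B : ℝ} (hB : 0 ≤ B)
    (hsum : ∑' n, μ (Xn n) * (‖c n‖₊ : ℝ≥0∞) ^ 2 = ENNReal.ofReal B) :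
    MemLp F 2 μ ∧ ∫ x, ‖F x‖ ^ 2 ∂μ = B := by
  have hlint : ∫⁻ x, (‖F x‖₊ : ℝ≥0∞) ^ 2 ∂μ = ENNReal.ofReal B := by
    rw [step_lintegral_aux hXnmeas hXndisj hXncover hF, hsum]
  have hnn : ∀ x, ((‖(‖F x‖ ^ 2 : ℝ)‖₊ : ℝ≥0∞)) = (‖F x‖₊ : ℝ≥0∞) ^ 2 := by
    intro x
    rw [nnnorm_pow, nnnorm_norm, ENNReal.coe_pow]
  have hintsq : Integrable (fun x => ‖F x‖ ^ 2) μ := by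
    refine ⟨((hmF.norm.pow_const 2).aestronglyMeasurable), ?_⟩
    have : ∫⁻ x, (‖(‖F x‖ ^ 2 : ℝ)‖₊ : ℝ≥0∞) ∂μ = ENNReal.ofReal B := by
      rw [← hlint]; exact lintegral_congr fun x => hnn x
    simp only [HasFiniteIntegral, enorm_eq_nnnorm, this]
    exact ENNReal.ofReal_lt_top
  refine ⟨(memLp_two_iff_integrable_sq_norm hmF.aestronglyMeasurable).mpr hintsq, ?_⟩
  rw [integral_eq_lintegral_of_nonneg_ae (ae_of_all _ fun x => sq_nonneg _)
    (hmF.norm.pow_const 2).aestronglyMeasurable]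
  have : ∫⁻ x, ENNReal.ofReal (‖F x‖ ^ 2) ∂μ = ENNReal.ofReal B := by
    rw [← hlint]
    refine lintegral_congr fun x => ?_
    rw [ENNReal.ofReal_pow (norm_nonneg _), ofReal_norm, enorm_eq_nnnorm]
  rw [this, ENNReal.toReal_ofReal hB]

lemma memℒp_two_mul_integrable_aux {a g : X → ℂ}
    (ha : MemLp a 2 μ) (hg : MemLp g 2 μ) :
    Integrable (fun x => a x * g x) μ := by
  have hc : MemLp (fun x => (starRingEnd ℂ) (a x)) 2 μ := by
    refine MemLp.of_le ha (RCLike.continuous_conj.comp_aestronglyMeasurable ha.1) ?_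
    exact ae_of_all _ fun x => by simp
  have h1 := MeasureTheory.L2.integrable_inner (𝕜 := ℂ) (hc.toLp _) (hg.toLp _)
  refine h1.congr ?_
  filter_upwards [hc.coeFn_toLp, hg.coeFn_toLp] with x hx1 hx2
  rw [hx1, hx2, RCLike.inner_apply, RingHomCompTriple.comp_apply, RingHom.id_apply, mul_comm]

lemma parseval_sq_aux {H : Type*} [NormedAddCommGroup H] [InnerProductSpace ℂ H]
    (b : HilbertBasis ℕ ℂ H) (g : H) :
    ∑' n, ‖(⟪g, b n⟫ : ℂ)‖ ^ 2 = ‖g‖ ^ 2 := by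
  apply Complex.ofReal_injective
  rw [Complex.ofReal_tsum]
  calc ∑' n, ((‖(⟪g, b n⟫ : ℂ)‖ ^ 2 : ℝ) : ℂ)
      = ∑' n, (⟪g, b n⟫ : ℂ) * ⟪b n, g⟫ := by
        refine tsum_congr fun n => ?_
        rw [← inner_conj_symm g (b n), RCLike.conj_mul, RCLike.norm_conj]
        norm_cast
    _ = ⟪g, g⟫ := b.tsum_inner_mul_inner g g
    _ = ((‖g‖ ^ 2 : ℝ) : ℂ) := by rw [inner_self_eq_norm_sq_to_K]; norm_cast

end Aux

/-- Existence of a continuous weak atomic system for a densely defined operator `A` on a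
separable Hilbert space: if `{Xₙ}` is a countable covering of `X` by disjoint measurable
sets of finite positive measure, `{eₙ} ⊂ D(A)` is an orthonormal basis of `H`, and
`ψ_x = A eₙ / √(μ Xₙ)` for `x ∈ Xₙ`, then `∫ ‖⟨f, ψ_x⟩‖² dμ = ‖A* f‖² < ∞` for every
`f ∈ D(A*)`, and every `f ∈ D(A)` admits `a_f ∈ L²(X, μ)` with `‖a_f‖₂ = ‖f‖` and
`⟨A f, u⟩ = ∫ a_f x ⟨ψ_x, u⟩ dμ` for all `u ∈ D(A*)`. -/
theorem exists_continuous_weak_atomic_system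
    {H : Type*} [NormedAddCommGroup H] [InnerProductSpace ℂ H] [CompleteSpace H]
    {X : Type*} [MeasurableSpace X] (μ : Measure X)
    (A : H →ₗ.[ℂ] H) (hA : Dense (A.domain : Set H))
    (Xn : ℕ → Set X) (hXnmeas : ∀ n, MeasurableSet (Xn n))
    (hXndisj : Pairwise (Function.onFun Disjoint Xn))
    (hXncover : (⋃ n, Xn n) = Set.univ)
    (hXnpos : ∀ n, 0 < μ (Xn n)) (hXnfin : ∀ n, μ (Xn n) < ⊤)
    (e : ℕ → H) (hON : Orthonormal ℂ e)
    (htotal : Dense ((Submodule.span ℂ (Set.range e) : Submodule ℂ H) : Set H))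
    (he : ∀ n, e n ∈ A.domain)
    (ψ : X → H)
    (hψ : ∀ n, ∀ x ∈ Xn n,
      ψ x = (Real.sqrt ((μ (Xn n)).toReal))⁻¹ • A ⟨e n, he n⟩) :
    (∀ f : H, ∀ hf : f ∈ A.adjoint.domain,
      MemLp (fun x => (⟪f, ψ x⟫ : ℂ)) 2 μ ∧
      ∫ x, ‖(⟪f, ψ x⟫ : ℂ)‖ ^ 2 ∂μ = ‖A.adjoint ⟨f, hf⟩‖ ^ 2) ∧
    (∀ f : H, ∀ hf : f ∈ A.domain, ∃ a : X → ℂ,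
      MemLp a 2 μ ∧
      ∫ x, ‖a x‖ ^ 2 ∂μ = ‖f‖ ^ 2 ∧
      ∀ u : H, u ∈ A.adjoint.domain →
        (⟪u, A ⟨f, hf⟩⟫ : ℂ) = ∫ x, a x * (⟪u, ψ x⟫ : ℂ) ∂μ) := by
  classical
  -- the Hilbert basis
  have hsp : ⊤ ≤ (Submodule.span ℂ (Set.range e)).topologicalClosure :=
    le_of_eq (Submodule.dense_iff_topologicalClosure_eq_top.mp htotal).symm
  set b : HilbertBasis ℕ ℂ H := HilbertBasis.mk hON hsp with hbdef
  have hb : ⇑b = e := HilbertBasis.coe_mk hON hsp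
  have hadj := A.adjoint_isFormalAdjoint hA
  -- the index function
  have hmem : ∀ x : X, ∃ n, x ∈ Xn n := fun x =>
    Set.mem_iUnion.mp (hXncover ▸ Set.mem_univ x)
  set idx : X → ℕ := fun x => (hmem x).choose with hidxdef
  have hidx : ∀ x, x ∈ Xn (idx x) := fun x => (hmem x).choose_spec
  have hidx_eq : ∀ n, ∀ x ∈ Xn n, idx x = n := by
    intro n x hx
    by_contra h
    exact Set.disjoint_left.mp (hXndisj h) (hidx x) hx
  have hidx_meas : Measurable idx := by
    apply measurable_to_countable'
    intro n
    have hpre : idx ⁻¹' {n} = Xn n := by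
      ext x
      simp only [Set.mem_preimage, Set.mem_singleton_iff]
      exact ⟨fun h => h ▸ hidx x, hidx_eq n x⟩
    rw [hpre]; exact hXnmeas n
  have hstep_meas : ∀ {c : ℕ → ℂ} {F : X → ℂ}, (∀ n, ∀ x ∈ Xn n, F x = c n) → Measurable F := by
    intro c F hF
    have hFeq : F = fun x => c (idx x) := funext fun x => hF _ x (hidx x)
    rw [hFeq]
    exact measurable_from_nat.comp hidx_meas
  -- numbers
  set tn : ℕ → ℝ := fun n => (μ (Xn n)).toReal with htndef
  have htnpos : ∀ n, 0 < tn n := fun n => ENNReal.toReal_pos (hXnpos n).ne' (hXnfin n).ne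
  have hμXn : ∀ n, μ (Xn n) = ENNReal.ofReal (tn n) := fun n =>
    (ENNReal.ofReal_toReal (hXnfin n).ne).symm
  set rn : ℕ → ℝ := fun n => (Real.sqrt (tn n))⁻¹ with hrndef
  have hrn_nonneg : ∀ n, 0 ≤ rn n := fun n => inv_nonneg.mpr (Real.sqrt_nonneg _)
  have hrn_sq : ∀ n, tn n * rn n ^ 2 = 1 := by
    intro n
    rw [hrndef]
    simp only
    rw [inv_pow, Real.sq_sqrt (htnpos n).le]
    exact mul_inv_cancel₀ (htnpos n).ne'
  -- key term computation
  have hterm : ∀ (n : ℕ) (z : ℂ),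
      μ (Xn n) * (‖(rn n : ℂ) * z‖₊ : ℝ≥0∞) ^ 2 = ENNReal.ofReal (‖z‖ ^ 2) := by
    intro n z
    rw [hμXn n, ← enorm_eq_nnnorm, ← ofReal_norm, ← ENNReal.ofReal_pow (norm_nonneg _),
      ← ENNReal.ofReal_mul (htnpos n).le]
    congr 1
    rw [norm_mul, Complex.norm_real, Real.norm_eq_abs, abs_of_nonneg (hrn_nonneg n), mul_pow,
      ← mul_assoc, hrn_sq n, one_mul]
  -- Parseval
  have hpars : ∀ g : H, ∑' n, ‖(⟪g, e n⟫ : ℂ)‖ ^ 2 = ‖g‖ ^ 2 := by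
    intro g
    have h := parseval_sq_aux b g
    rw [hb] at h
    exact h
  have hsummable : ∀ g : H, Summable fun n => ‖(⟪g, e n⟫ : ℂ)‖ ^ 2 := by
    intro g
    refine (hON.inner_products_summable (x := g)).congr fun n => ?_
    rw [norm_inner_symm]
  have hofsum : ∀ g : H,
      (∑' n, ENNReal.ofReal (‖(⟪g, e n⟫ : ℂ)‖ ^ 2)) = ENNReal.ofReal (‖g‖ ^ 2) := by
    intro g
    rw [← ENNReal.ofReal_tsum_of_nonneg (fun n => sq_nonneg _) (hsummable g), hpars g]
  -- part 1
  have part1 : ∀ f : H, ∀ hf : f ∈ A.adjoint.domain,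
      MemLp (fun x => (⟪f, ψ x⟫ : ℂ)) 2 μ ∧
      ∫ x, ‖(⟪f, ψ x⟫ : ℂ)‖ ^ 2 ∂μ = ‖A.adjoint ⟨f, hf⟩‖ ^ 2 := by
    intro f hf
    set g : H := A.adjoint ⟨f, hf⟩ with hgdef
    set c : ℕ → ℂ := fun n => (rn n : ℂ) * ⟪g, e n⟫ with hcdef
    have hF : ∀ n, ∀ x ∈ Xn n, (⟪f, ψ x⟫ : ℂ) = c n := by
      intro n x hx
      rw [hψ n x hx, RCLike.real_smul_eq_coe_smul (K := ℂ), inner_smul_right]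
      congr 1
      exact (hadj ⟨f, hf⟩ ⟨e n, he n⟩).symm
    have hsumv : ∑' n, μ (Xn n) * (‖c n‖₊ : ℝ≥0∞) ^ 2 = ENNReal.ofReal (‖g‖ ^ 2) := by
      calc ∑' n, μ (Xn n) * (‖c n‖₊ : ℝ≥0∞) ^ 2
          = ∑' n, ENNReal.ofReal (‖(⟪g, e n⟫ : ℂ)‖ ^ 2) := tsum_congr fun n => hterm n _
        _ = ENNReal.ofReal (‖g‖ ^ 2) := hofsum g
    exact step_memℒp_and_integral_aux hXnmeas hXndisj hXncover hF (hstep_meas hF)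
      (sq_nonneg _) hsumv
  refine ⟨part1, ?_⟩
  -- part 2
  intro f hf
  set c2 : ℕ → ℂ := fun n => (rn n : ℂ) * ⟪e n, f⟫ with hc2def
  set a : X → ℂ := fun x => c2 (idx x) with hadef
  have ha : ∀ n, ∀ x ∈ Xn n, a x = c2 n := by
    intro n x hx
    rw [hadef]
    simp only
    rw [hidx_eq n x hx]
  have hsumv : ∑' n, μ (Xn n) * (‖c2 n‖₊ : ℝ≥0∞) ^ 2 = ENNReal.ofReal (‖f‖ ^ 2) := by
    calc ∑' n, μ (Xn n) * (‖c2 n‖₊ : ℝ≥0∞) ^ 2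
        = ∑' n, ENNReal.ofReal (‖(⟪e n, f⟫ : ℂ)‖ ^ 2) := tsum_congr fun n => hterm n _
      _ = ∑' n, ENNReal.ofReal (‖(⟪f, e n⟫ : ℂ)‖ ^ 2) := by
          refine tsum_congr fun n => ?_
          rw [norm_inner_symm]
      _ = ENNReal.ofReal (‖f‖ ^ 2) := hofsum f
  obtain ⟨hamem, haint⟩ := step_memℒp_and_integral_aux hXnmeas hXndisj hXncover ha
    (hstep_meas ha) (sq_nonneg _) hsumv
  refine ⟨a, hamem, haint, ?_⟩
  intro u hu
  set u' : A.adjoint.domain := ⟨u, hu⟩ with hu'def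
  have hψu : MemLp (fun x => (⟪u, ψ x⟫ : ℂ)) 2 μ := (part1 u hu).1
  have hint : Integrable (fun x => a x * ⟪u, ψ x⟫) μ := memℒp_two_mul_integrable_aux hamem hψu
  set d : ℕ → ℂ := fun n => c2 n * ((rn n : ℂ) * ⟪u, A ⟨e n, he n⟩⟫) with hddef
  have hG : ∀ n, ∀ x ∈ Xn n, (fun x => a x * ⟪u, ψ x⟫) x = d n := by
    intro n x hx
    simp only
    rw [ha n x hx, hψ n x hx, RCLike.real_smul_eq_coe_smul (K := ℂ), inner_smul_right]
    rfl
  rw [step_integral_aux hXnmeas hXndisj hXncover hG hint]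
  have hterm2 : ∀ n, (μ (Xn n)).toReal • d n
      = (⟪(A.adjoint u' : H), e n⟫ : ℂ) * ⟪e n, f⟫ := by
    intro n
    have hiu : (⟪u, A ⟨e n, he n⟩⟫ : ℂ) = ⟪(A.adjoint u' : H), e n⟫ :=
      (hadj u' ⟨e n, he n⟩).symm
    have hone : ((tn n : ℂ)) * ((rn n : ℂ)) ^ 2 = 1 := by
      have h := hrn_sq n
      calc ((tn n : ℂ)) * ((rn n : ℂ)) ^ 2 = ((tn n * rn n ^ 2 : ℝ) : ℂ) := by push_cast; ring
        _ = 1 := by rw [h, Complex.ofReal_one]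
    calc (μ (Xn n)).toReal • d n
        = (tn n : ℂ) * ((rn n : ℂ) * ⟪e n, f⟫ * ((rn n : ℂ) * ⟪u, A ⟨e n, he n⟩⟫)) := by
          rw [Complex.real_smul]
      _ = ((tn n : ℂ) * (rn n : ℂ) ^ 2) * (⟪e n, f⟫ * ⟪u, A ⟨e n, he n⟩⟫) := by ring
      _ = ⟪e n, f⟫ * ⟪u, A ⟨e n, he n⟩⟫ := by rw [hone, one_mul]
      _ = (⟪(A.adjoint u' : H), e n⟫ : ℂ) * ⟪e n, f⟫ := by rw [hiu]; ring
  rw [tsum_congr hterm2]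
  have h2 := b.tsum_inner_mul_inner (A.adjoint u' : H) f
  rw [hb] at h2
  rw [h2]
  exact (hadj u' ⟨f, hf⟩).symm
end

section
/- Let A be a closed densely defined operator on H with range R(A) = H, A† ∈ B(H) its pseudo-inverse, ψ a continuous weak A-frame, and φ a Bessel weak A-dual of ψ. Define θ_x := (A†)* φ_x. Then θ : X → H is a Bessel function, and every u ∈ D(A*) satisfies the weak reproducing formula ⟨f,u⟩ = ∫_X ⟨f,θ_x⟩⟨ψ_x,u⟩ dμ(x) for all f ∈ H. -/
open MeasureTheory Filter Topology
open scoped ComplexInnerProductSpace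

/-- Let `A` be closed, densely defined with `R(A) = H`, and `A† ∈ B(H)` its
pseudo-inverse (`A A† = I`, `N(A†) = R(A)^⊥ = {0}`, `closure R(A†) = N(A)^⊥`). If `ψ` is
a continuous weak `A`-frame and `φ` a Bessel weak `A`-dual of `ψ`, then
`θ_x := (A†)* φ_x` is Bessel and `⟨f, u⟩ = ∫ ⟨f, θ_x⟩ ⟨ψ_x, u⟩ dμ` for all `f ∈ H`,
`u ∈ D(A*)`. (Paper inner products are `⟪·,·⟫` with swapped arguments.) -/
theorem weak_reproducing_formula
    {H : Type*} [NormedAddCommGroup H] [InnerProductSpace ℂ H] [CompleteSpace H]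
    {X : Type*} [MeasurableSpace X] (μ : Measure X)
    (A : H →ₗ.[ℂ] H) (hA : Dense (A.domain : Set H)) (hAclosed : A.IsClosed)
    (Adag : H →L[ℂ] H)
    (hdag_mem : ∀ f : H, Adag f ∈ A.domain)
    (hdag : ∀ f : H, A ⟨Adag f, hdag_mem f⟩ = f)
    (hdag_ker : ∀ f : H, Adag f = 0 → f = 0)
    (hdag_range : closure (Set.range Adag) =
      {f : H | ∀ g : A.domain, A g = 0 → (⟪(g : H), f⟫ : ℂ) = 0})
    (ψ φ : X → H)
    (hψmeas : ∀ f : H, f ∈ A.adjoint.domain → Measurable fun x => (⟪f, ψ x⟫ : ℂ))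
    (α : ℝ) (hα : 0 < α)
    (hframe : ∀ f : H, ∀ hf : f ∈ A.adjoint.domain,
      MemLp (fun x => (⟪f, ψ x⟫ : ℂ)) 2 μ ∧
      α * ‖A.adjoint ⟨f, hf⟩‖ ^ 2 ≤ ∫ x, ‖(⟪f, ψ x⟫ : ℂ)‖ ^ 2 ∂μ)
    (γ : ℝ) (hγ : 0 < γ)
    (hφBessel : ∀ f : H, MemLp (fun x => (⟪f, φ x⟫ : ℂ)) 2 μ ∧
      ∫ x, ‖(⟪f, φ x⟫ : ℂ)‖ ^ 2 ∂μ ≤ γ * ‖f‖ ^ 2)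
    (hdual : ∀ h : H, ∀ hh : h ∈ A.domain, ∀ u : H, u ∈ A.adjoint.domain →
      (⟪u, A ⟨h, hh⟩⟫ : ℂ) = ∫ x, (⟪φ x, h⟫ : ℂ) * (⟪u, ψ x⟫ : ℂ) ∂μ) :
    (∃ β > (0 : ℝ), ∀ f : H,
      MemLp (fun x => (⟪f, ContinuousLinearMap.adjoint Adag (φ x)⟫ : ℂ)) 2 μ ∧
      ∫ x, ‖(⟪f, ContinuousLinearMap.adjoint Adag (φ x)⟫ : ℂ)‖ ^ 2 ∂μ ≤ β * ‖f‖ ^ 2) ∧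
    (∀ u : H, u ∈ A.adjoint.domain → ∀ f : H,
      (⟪u, f⟫ : ℂ) =
        ∫ x, (⟪ContinuousLinearMap.adjoint Adag (φ x), f⟫ : ℂ) * (⟪u, ψ x⟫ : ℂ) ∂μ) := by
  have hkey : ∀ (f : H) (x : X), (⟪f, ContinuousLinearMap.adjoint Adag (φ x)⟫ : ℂ)
      = (⟪Adag f, φ x⟫ : ℂ) := fun f x =>
    ContinuousLinearMap.adjoint_inner_right Adag f (φ x)
  constructor
  · refine ⟨γ * (‖Adag‖ ^ 2 + 1), by positivity, fun f => ?_⟩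
    simp only [hkey f]
    refine ⟨(hφBessel (Adag f)).1, le_trans (hφBessel (Adag f)).2 ?_⟩
    have h1 : ‖Adag f‖ ≤ ‖Adag‖ * ‖f‖ := Adag.le_opNorm f
    have h2 : ‖Adag f‖ ^ 2 ≤ (‖Adag‖ * ‖f‖) ^ 2 := by
      apply pow_le_pow_left₀ (norm_nonneg _) h1
    nlinarith [norm_nonneg f, sq_nonneg ‖f‖, norm_nonneg Adag]
  · intro u hu f
    have h := hdual (Adag f) (hdag_mem f) u hu
    rw [hdag f] at h
    rw [h]
    congr 1; funext x; congr 1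
    exact (ContinuousLinearMap.adjoint_inner_left Adag f (φ x)).symm
end

section
/- Let J, H be Hilbert spaces, K ∈ B(J,H), ξ : X → J a continuous frame for J with dual frame ϑ : X → J. Then Kξ (i.e., x ↦ Kξ_x) is a continuous atomic system for K: it is Bessel, and for every f ∈ J the coefficients a_f(x) = ⟨f,ϑ_x⟩ satisfy ‖a_f‖₂ ≤ γ‖f‖ for some γ > 0 and ⟨Kf,h⟩ = ∫_X a_f(x)⟨Kξ_x,h⟩ dμ(x) for all h ∈ H. -/
open MeasureTheory Filter Topology
open scoped ComplexInnerProductSpace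

/-- If `K ∈ B(J, H)` and `ξ` is a continuous frame for `J` with dual frame `ϑ`, then
`K ξ` is a continuous atomic system for `K`: it is Bessel, and the coefficients
`a_f x = ⟨f, ϑ_x⟩` satisfy `‖a_f‖₂ ≤ γ ‖f‖` for some `γ > 0` and
`⟨K f, h⟩ = ∫ a_f x ⟨K ξ_x, h⟩ dμ` for all `h ∈ H`. (Paper inner products are
`⟪·,·⟫` with swapped arguments.) -/
theorem image_frame_atomic_system
    {J H : Type*}
    [NormedAddCommGroup J] [InnerProductSpace ℂ J] [CompleteSpace J]
    [NormedAddCommGroup H] [InnerProductSpace ℂ H] [CompleteSpace H]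
    {X : Type*} [MeasurableSpace X] (μ : Measure X)
    (K : J →L[ℂ] H) (ξ ϑ : X → J)
    (hξmeas : ∀ f : J, Measurable fun x => (⟪f, ξ x⟫ : ℂ))
    (hϑmeas : ∀ f : J, Measurable fun x => (⟪f, ϑ x⟫ : ℂ))
    (α β : ℝ) (hα : 0 < α) (hβ : 0 < β)
    (hξframe : ∀ f : J, MemLp (fun x => (⟪f, ξ x⟫ : ℂ)) 2 μ ∧
      α * ‖f‖ ^ 2 ≤ ∫ x, ‖(⟪f, ξ x⟫ : ℂ)‖ ^ 2 ∂μ ∧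
      ∫ x, ‖(⟪f, ξ x⟫ : ℂ)‖ ^ 2 ∂μ ≤ β * ‖f‖ ^ 2)
    (hϑBessel : ∀ f : J, MemLp (fun x => (⟪f, ϑ x⟫ : ℂ)) 2 μ)
    (hdual : ∀ f g : J,
      (⟪g, f⟫ : ℂ) = ∫ x, (⟪ϑ x, f⟫ : ℂ) * (⟪g, ξ x⟫ : ℂ) ∂μ) :
    (∃ b > (0 : ℝ), ∀ h : H,
      MemLp (fun x => (⟪h, K (ξ x)⟫ : ℂ)) 2 μ ∧
      ∫ x, ‖(⟪h, K (ξ x)⟫ : ℂ)‖ ^ 2 ∂μ ≤ b * ‖h‖ ^ 2) ∧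
    ∃ γ > (0 : ℝ), ∀ f : J,
      MemLp (fun x => (⟪ϑ x, f⟫ : ℂ)) 2 μ ∧
      Real.sqrt (∫ x, ‖(⟪ϑ x, f⟫ : ℂ)‖ ^ 2 ∂μ) ≤ γ * ‖f‖ ∧
      ∀ h : H, (⟪h, K f⟫ : ℂ) =
        ∫ x, (⟪ϑ x, f⟫ : ℂ) * (⟪h, K (ξ x)⟫ : ℂ) ∂μ := by
  classical
  set K' : H →L[ℂ] J := ContinuousLinearMap.adjoint K with hK'
  have hKadj : ∀ (h : H) (x : X), (⟪h, K (ξ x)⟫ : ℂ) = (⟪K' h, ξ x⟫ : ℂ) := by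
    intro h x
    rw [hK', ContinuousLinearMap.adjoint_inner_left]
  constructor
  · -- Bessel property of `K ξ`
    refine ⟨β * (‖K'‖ + 1) ^ 2, by positivity, fun h => ?_⟩
    simp only [hKadj h]
    refine ⟨(hξframe (K' h)).1, ?_⟩
    have h1 := (hξframe (K' h)).2.2
    have h2 : ‖K' h‖ ≤ ‖K'‖ * ‖h‖ := K'.le_opNorm h
    have h3 : (0:ℝ) ≤ ‖K' h‖ := norm_nonneg _
    have h4 : (0:ℝ) ≤ ‖h‖ := norm_nonneg _
    have h5 : (0:ℝ) ≤ ‖K'‖ := norm_nonneg _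
    have h6 : ‖K' h‖ ^ 2 ≤ (‖K'‖ + 1) ^ 2 * ‖h‖ ^ 2 := by
      nlinarith [mul_le_mul h2 h2 h3 (by positivity : (0:ℝ) ≤ ‖K'‖ * ‖h‖), sq_nonneg ‖h‖]
    calc ∫ x, ‖(⟪K' h, ξ x⟫ : ℂ)‖ ^ 2 ∂μ ≤ β * ‖K' h‖ ^ 2 := h1
      _ ≤ β * ((‖K'‖ + 1) ^ 2 * ‖h‖ ^ 2) := mul_le_mul_of_nonneg_left h6 hβ.le
      _ = β * (‖K'‖ + 1) ^ 2 * ‖h‖ ^ 2 := by ring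
  · -- the coefficients
    have memT : ∀ f : J, MemLp (fun x => (⟪ϑ x, f⟫ : ℂ)) 2 μ := by
      intro f
      have h1 : MemLp (fun x => (⟪(⟪f, ϑ x⟫ : ℂ), (1:ℂ)⟫ : ℂ)) 2 μ :=
        (hϑBessel f).inner_const (1 : ℂ)
      have e : (fun x => (⟪ϑ x, f⟫ : ℂ)) = fun x => (⟪(⟪f, ϑ x⟫ : ℂ), (1:ℂ)⟫ : ℂ) := by
        funext x
        rw [RCLike.inner_apply, one_mul]
        exact (inner_conj_symm (ϑ x) f).symm
      rw [e]; exact h1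
    haveI : Fact ((1:ENNReal) ≤ 2) := ⟨one_le_two⟩
    -- the analysis operator of the dual family
    let T : J →ₗ[ℂ] Lp ℂ 2 μ :=
      { toFun := fun f => (memT f).toLp _
        map_add' := by
          intro f g
          rw [MemLp.toLp_congr (memT (f + g)) ((memT f).add (memT g))
            (Filter.Eventually.of_forall fun x => by simp [inner_add_right]),
            MemLp.toLp_add]
        map_smul' := by
          intro c f
          rw [MemLp.toLp_congr (memT (c • f)) ((memT f).const_smul c)
            (Filter.Eventually.of_forall fun x => by
              simp [inner_smul_right, smul_eq_mul]),
            MemLp.toLp_const_smul]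
          rfl }
    have hTcoe : ∀ f : J, (T f : X → ℂ) =ᵐ[μ] fun x => (⟪ϑ x, f⟫ : ℂ) :=
      fun f => (memT f).coeFn_toLp
    have hTcont : Continuous T := by
      apply T.continuous_of_seq_closed_graph
      intro u f a hu hTu
      have hTu' : Tendsto (fun n => eLpNorm ((T (u n) : X → ℂ) - (a : X → ℂ)) 2 μ)
          atTop (𝓝 0) :=
        (Lp.tendsto_Lp_iff_tendsto_eLpNorm' (fun n => T (u n)) a).mp hTu
      have hTIM : TendstoInMeasure μ (fun n => (T (u n) : X → ℂ)) atTop (a : X → ℂ) :=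
        tendstoInMeasure_of_tendsto_eLpNorm (by norm_num)
          (fun n => Lp.aestronglyMeasurable _) (Lp.aestronglyMeasurable a) hTu'
      obtain ⟨ns, hns, hae⟩ := hTIM.exists_seq_tendsto_ae
      have hcoe : ∀ᵐ x ∂μ, ∀ n, (T (u n) : X → ℂ) x = (⟪ϑ x, u n⟫ : ℂ) :=
        ae_all_iff.2 fun n => hTcoe (u n)
      have hae2 : (a : X → ℂ) =ᵐ[μ] fun x => (⟪ϑ x, f⟫ : ℂ) := by
        filter_upwards [hae, hcoe] with x hx hc
        have h1 : Tendsto (fun i => (⟪ϑ x, u (ns i)⟫ : ℂ)) atTop (𝓝 ((a : X → ℂ) x)) := by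
          simpa only [hc] using hx
        have h2 : Tendsto (fun i => (⟪ϑ x, u (ns i)⟫ : ℂ)) atTop (𝓝 (⟪ϑ x, f⟫ : ℂ)) :=
          ((innerSL ℂ (ϑ x)).continuous.tendsto f).comp (hu.comp hns.tendsto_atTop)
        exact tendsto_nhds_unique h1 h2
      exact Lp.ext (hae2.trans (hTcoe f).symm)
    let Tc : J →L[ℂ] Lp ℂ 2 μ := ⟨T, hTcont⟩
    have hnorm : ∀ f : J, ∫ x, ‖(⟪ϑ x, f⟫ : ℂ)‖ ^ 2 ∂μ = ‖T f‖ ^ 2 := by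
      intro f
      calc ∫ x, ‖(⟪ϑ x, f⟫ : ℂ)‖ ^ 2 ∂μ
          = ∫ x, ‖(T f : X → ℂ) x‖ ^ 2 ∂μ := by
            refine integral_congr_ae ?_
            filter_upwards [hTcoe f] with x hx
            rw [hx]
        _ = ∫ x, RCLike.re (⟪(T f : X → ℂ) x, (T f : X → ℂ) x⟫ : ℂ) ∂μ := by
            refine integral_congr_ae (Filter.Eventually.of_forall fun x => ?_)
            exact (inner_self_eq_norm_sq _).symm
        _ = RCLike.re (∫ x, (⟪(T f : X → ℂ) x, (T f : X → ℂ) x⟫ : ℂ) ∂μ) :=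
            integral_re (L2.integrable_inner (𝕜 := ℂ) (T f) (T f))
        _ = RCLike.re (⟪T f, T f⟫ : ℂ) := by rw [L2.inner_def]
        _ = ‖T f‖ ^ 2 := inner_self_eq_norm_sq _
    refine ⟨‖Tc‖ + 1, by positivity, fun f => ?_⟩
    refine ⟨memT f, ?_, ?_⟩
    · rw [hnorm f, Real.sqrt_sq (norm_nonneg _)]
      calc ‖T f‖ = ‖Tc f‖ := rfl
        _ ≤ ‖Tc‖ * ‖f‖ := Tc.le_opNorm f
        _ ≤ (‖Tc‖ + 1) * ‖f‖ := by nlinarith [norm_nonneg f, norm_nonneg Tc]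
    · intro h
      have := hdual f (K' h)
      rw [ContinuousLinearMap.adjoint_inner_left] at this
      calc (⟪h, K f⟫ : ℂ) = ∫ x, (⟪ϑ x, f⟫ : ℂ) * (⟪K' h, ξ x⟫ : ℂ) ∂μ := this
        _ = ∫ x, (⟪ϑ x, f⟫ : ℂ) * (⟪h, K (ξ x)⟫ : ℂ) ∂μ := by
            refine integral_congr_ae (Filter.Eventually.of_forall fun x => ?_)
            exact congrArg (fun z => (⟪ϑ x, f⟫ : ℂ) * z) (hKadj h x).symm
end

section
/- Let (X,μ) be σ-finite, K ∈ B(J,H), and ψ : X → H weakly measurable. The following are equivalent: (i) ψ is a continuous K-frame for H; (ii) the synthesis operator C_ψ* is bounded and R(K) ⊆ R(C_ψ*); (iii) C_ψ* is bounded and K = C_ψ* M for some M ∈ B(J, L²(X,μ)); (iv) ψ is Bessel and S_ψ = C_ψ* C_ψ ≥ α K K* on H for some α > 0; (v) K = S_ψ^{1/2} U for some U ∈ B(J,H). -/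
open MeasureTheory Filter Topology
open scoped ComplexInnerProductSpace

open ContinuousLinearMap

section CKFaux

variable {G H J : Type*}
  [NormedAddCommGroup G] [InnerProductSpace ℂ G] [CompleteSpace G]
  [NormedAddCommGroup H] [InnerProductSpace ℂ H] [CompleteSpace H]
  [NormedAddCommGroup J] [InnerProductSpace ℂ J] [CompleteSpace J]

lemma ckf_le_of_sq_le_sq {a b : ℝ} (ha : 0 ≤ a) (hb : 0 ≤ b) (h : a ^ 2 ≤ b ^ 2) : a ≤ b := by
  nlinarith

/-- Shmul'yan-type pointwise range criterion. -/
lemma ckf_mem_range (B : G →L[ℂ] H) (x : H) (c : ℝ)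
    (hb : ∀ h : H, ‖(⟪x, h⟫ : ℂ)‖ ≤ c * ‖adjoint B h‖) : x ∈ Set.range B := by
  classical
  set Bs := adjoint B with hBs
  have key : ∀ h h' : H, Bs h = Bs h' → (⟪x, h⟫ : ℂ) = ⟪x, h'⟫ := by
    intro h h' hh
    have h1 := hb (h - h')
    rw [map_sub, hh, sub_self, norm_zero, mul_zero] at h1
    have h2 : (⟪x, h - h'⟫ : ℂ) = 0 := norm_le_zero_iff.mp h1
    rwa [inner_sub_right, sub_eq_zero] at h2
  set V : Submodule ℂ G := LinearMap.range (Bs : H →ₗ[ℂ] G) with hV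
  have hpick : ∀ u : V, ∃ h : H, Bs h = (u : G) := fun u => LinearMap.mem_range.mp u.2
  let pick : V → H := fun u => (hpick u).choose
  have hpick' : ∀ u : V, Bs (pick u) = (u : G) := fun u => (hpick u).choose_spec
  let ℓ₀ : V →ₗ[ℂ] ℂ :=
    { toFun := fun u => ⟪x, pick u⟫
      map_add' := by
        intro u v
        have h1 : Bs (pick (u + v)) = Bs (pick u + pick v) := by
          rw [map_add, hpick', hpick', hpick']; rfl
        exact (key _ _ h1).trans (inner_add_right _ _ _)
      map_smul' := by
        intro a u
        have h1 : Bs (pick (a • u)) = Bs (a • pick u) := by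
          rw [_root_.map_smul, hpick', hpick']; rfl
        exact (key _ _ h1).trans (inner_smul_right _ _ _) }
  let ℓ : V →L[ℂ] ℂ := LinearMap.mkContinuous ℓ₀ c (fun u => by
    calc ‖ℓ₀ u‖ = ‖(⟪x, pick u⟫ : ℂ)‖ := rfl
    _ ≤ c * ‖adjoint B (pick u)‖ := hb _
    _ = c * ‖u‖ := by rw [← hBs, hpick']; rfl)
  obtain ⟨F, hF, -⟩ := exists_extension_norm_eq V ℓ
  set g := (InnerProductSpace.toDual ℂ G).symm F with hg
  refine ⟨g, ext_inner_right ℂ fun h => ?_⟩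
  have hmem : Bs h ∈ V := LinearMap.mem_range.mpr ⟨h, rfl⟩
  calc (⟪B g, h⟫ : ℂ) = ⟪g, Bs h⟫ := (adjoint_inner_right B g h).symm
  _ = F (Bs h) := InnerProductSpace.toDual_symm_apply
  _ = ℓ (⟨Bs h, hmem⟩ : V) := hF ⟨Bs h, hmem⟩
  _ = ⟪x, pick ⟨Bs h, hmem⟩⟫ := rfl
  _ = ⟪x, h⟫ := key _ _ (hpick' _)

/-- Douglas factorization from range inclusion, via the closed graph theorem. -/
lemma ckf_douglas (B : G →L[ℂ] H) (K : J →L[ℂ] H) (hr : Set.range K ⊆ Set.range B) :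
    ∃ M : J →L[ℂ] G, K = B.comp M := by
  classical
  set N : Submodule ℂ G := LinearMap.ker (B : G →ₗ[ℂ] H) with hN
  haveI : CompleteSpace N := (ContinuousLinearMap.isClosed_ker B).completeSpace_coe
  have hex : ∀ j : J, ∃ g₀ : G, B g₀ = K j := fun j => hr ⟨j, rfl⟩
  let m : J → G := fun j => (Submodule.orthogonalProjection Nᗮ (hex j).choose : G)
  have hmem : ∀ j, m j ∈ Nᗮ := fun j => SetLike.coe_mem _
  have hBm : ∀ j, B (m j) = K j := by
    intro j
    have hsplit : (Submodule.orthogonalProjection N (hex j).choose : G) +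
        (Submodule.orthogonalProjection Nᗮ (hex j).choose : G) = (hex j).choose :=
      N.starProjection_add_starProjection_orthogonal _
    have h0 : B ((Submodule.orthogonalProjection N (hex j).choose : G)) = 0 :=
      LinearMap.mem_ker.mp (SetLike.coe_mem _)
    have : B ((Submodule.orthogonalProjection N (hex j).choose : G)) + B (m j) = K j := by
      rw [← map_add, hsplit, (hex j).choose_spec]
    rwa [h0, zero_add] at this
  have uniq : ∀ (j : J) (g g' : G), g ∈ Nᗮ → g' ∈ Nᗮ → B g = K j → B g' = K j → g = g' := by
    intro j g g' hg hg' hbg hbg'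
    have h1 : g - g' ∈ N := LinearMap.mem_ker.mpr (by show B (g - g') = 0; rw [map_sub, hbg, hbg', sub_self])
    have h2 : g - g' ∈ Nᗮ := Submodule.sub_mem _ hg hg'
    have := (Submodule.orthogonal_disjoint N).le_bot ⟨h1, h2⟩
    rw [Submodule.mem_bot] at this
    exact sub_eq_zero.mp this
  let M₀ : J →ₗ[ℂ] G :=
    { toFun := m
      map_add' := fun j j' => uniq (j + j') _ _ (hmem _)
          (Submodule.add_mem _ (hmem j) (hmem j'))
          (hBm _) (by rw [map_add, hBm, hBm, map_add])
      map_smul' := fun a j => uniq (a • j) _ _ (hmem _)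
          (Submodule.smul_mem _ a (hmem j))
          (hBm _) (by show B (a • m j) = K (a • j); rw [_root_.map_smul, _root_.map_smul, hBm]) }
  have hgraph : IsClosed (M₀.graph : Set (J × G)) := by
    have heq : (M₀.graph : Set (J × G)) =
        (Prod.snd ⁻¹' (Nᗮ : Set G)) ∩ ((fun p : J × G => B p.2 - K p.1) ⁻¹' {0}) := by
      ext ⟨j, g⟩
      simp only [SetLike.mem_coe, LinearMap.mem_graph_iff, Set.mem_inter_iff, Set.mem_preimage,
        Set.mem_singleton_iff, sub_eq_zero]
      constructor
      · rintro rfl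
        exact ⟨hmem j, hBm j⟩
      · rintro ⟨h1, h2⟩
        exact uniq j g (M₀ j) h1 (hmem j) h2 (hBm j)
    rw [heq]
    exact ((Submodule.isClosed_orthogonal N).preimage continuous_snd).inter
      (isClosed_singleton.preimage ((B.continuous.comp continuous_snd).sub
        (K.continuous.comp continuous_fst)))
  refine ⟨ContinuousLinearMap.ofIsClosedGraph hgraph, ?_⟩
  ext j
  exact (hBm j).symm

/-- Range inclusion from a quadratic lower bound. -/
lemma ckf_range_of_bound (B : G →L[ℂ] H) (K : J →L[ℂ] H) (α : ℝ) (hα : 0 < α)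
    (hb : ∀ h : H, α * ‖adjoint K h‖ ^ 2 ≤ ‖adjoint B h‖ ^ 2) :
    Set.range K ⊆ Set.range B := by
  rintro - ⟨j, rfl⟩
  refine ckf_mem_range B (K j) (‖j‖ * (Real.sqrt α)⁻¹) fun h => ?_
  have hs : 0 < Real.sqrt α := Real.sqrt_pos.mpr hα
  have hKB : ‖adjoint K h‖ ≤ (Real.sqrt α)⁻¹ * ‖adjoint B h‖ := by
    have h1 : (Real.sqrt α * ‖adjoint K h‖) ^ 2 ≤ ‖adjoint B h‖ ^ 2 := by
      rw [mul_pow, Real.sq_sqrt hα.le]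
      exact hb h
    have h2 := ckf_le_of_sq_le_sq (by positivity) (norm_nonneg _) h1
    rw [inv_mul_eq_div, le_div_iff₀ hs]
    linarith
  calc ‖(⟪K j, h⟫ : ℂ)‖ = ‖(⟪j, adjoint K h⟫ : ℂ)‖ := by rw [adjoint_inner_right]
  _ ≤ ‖j‖ * ‖adjoint K h‖ := norm_inner_le_norm _ _
  _ ≤ ‖j‖ * ((Real.sqrt α)⁻¹ * ‖adjoint B h‖) := by
      exact mul_le_mul_of_nonneg_left hKB (norm_nonneg _)
  _ = ‖j‖ * (Real.sqrt α)⁻¹ * ‖adjoint B h‖ := (mul_assoc _ _ _).symm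

lemma ckf_factor (B : G →L[ℂ] H) (K : J →L[ℂ] H) (α : ℝ) (hα : 0 < α)
    (hb : ∀ h : H, α * ‖adjoint K h‖ ^ 2 ≤ ‖adjoint B h‖ ^ 2) :
    ∃ M : J →L[ℂ] G, K = B.comp M :=
  ckf_douglas B K (ckf_range_of_bound B K α hα hb)

lemma ckf_sqrt (T : H →L[ℂ] H) (hT : T.IsPositive) :
    ∃ S : H →L[ℂ] H, S.IsPositive ∧ S.comp S = T := by
  refine ⟨CFC.sqrt T, ?_, ?_⟩
  · rw [← ContinuousLinearMap.nonneg_iff_isPositive]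
    exact CFC.sqrt_nonneg T
  · exact CFC.sqrt_mul_sqrt_self T ((ContinuousLinearMap.nonneg_iff_isPositive T).2 hT)

variable {X : Type*} [MeasurableSpace X] {μ : MeasureTheory.Measure X}

/-- The `L²` norm as an integral. -/
lemma ckf_norm_sq (F : Lp ℂ 2 μ) (f : X → ℂ) (hf : (F : X → ℂ) =ᵐ[μ] f) :
    ∫ x, ‖f x‖ ^ 2 ∂μ = ‖F‖ ^ 2 := by
  have h1 : (⟪F, F⟫ : ℂ) = ∫ x, (⟪F x, F x⟫ : ℂ) ∂μ := L2.inner_def F F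
  have h2 : Integrable (fun x => (⟪F x, F x⟫ : ℂ)) μ := L2.integrable_inner F F
  calc ∫ x, ‖f x‖ ^ 2 ∂μ = ∫ x, ‖(F : X → ℂ) x‖ ^ 2 ∂μ :=
        integral_congr_ae (hf.mono fun x hx => by simp only [hx])
  _ = ∫ x, RCLike.re (⟪F x, F x⟫ : ℂ) ∂μ :=
        integral_congr_ae (Eventually.of_forall fun x => (inner_self_eq_norm_sq _).symm)
  _ = RCLike.re (∫ x, (⟪F x, F x⟫ : ℂ) ∂μ) := integral_re h2
  _ = RCLike.re (⟪F, F⟫ : ℂ) := by rw [h1]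
  _ = ‖F‖ ^ 2 := inner_self_eq_norm_sq F

/-- Construction of the analysis operator from a Bessel bound. -/
lemma ckf_exists_C (ψ : X → H) (β : ℝ) (hβ : 0 ≤ β)
    (hmem : ∀ f : H, MemLp (fun x => (⟪ψ x, f⟫ : ℂ)) 2 μ)
    (hub : ∀ h : H, ∫ x, ‖(⟪h, ψ x⟫ : ℂ)‖ ^ 2 ∂μ ≤ β * ‖h‖ ^ 2) :
    ∃ C : H →L[ℂ] Lp ℂ 2 μ, ∀ f : H, (C f : X → ℂ) =ᵐ[μ] fun x => (⟪ψ x, f⟫ : ℂ) := by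
  let L : H →ₗ[ℂ] Lp ℂ 2 μ :=
    { toFun := fun f => (hmem f).toLp (fun x => (⟪ψ x, f⟫ : ℂ))
      map_add' := by
        intro f g
        show MemLp.toLp _ (hmem (f + g)) = MemLp.toLp _ (hmem f) + MemLp.toLp _ (hmem g)
        rw [← MemLp.toLp_add (hmem f) (hmem g)]
        exact MemLp.toLp_congr (hmem (f + g)) ((hmem f).add (hmem g))
          (Eventually.of_forall fun x => inner_add_right _ _ _)
      map_smul' := by
        intro a f
        show MemLp.toLp _ (hmem (a • f)) = a • MemLp.toLp _ (hmem f)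
        rw [← MemLp.toLp_const_smul a (hmem f)]
        exact MemLp.toLp_congr (hmem (a • f)) ((hmem f).const_smul a)
          (Eventually.of_forall fun x => by simp [inner_smul_right, smul_eq_mul]) }
  have hbound : ∀ f : H, ‖L f‖ ≤ Real.sqrt β * ‖f‖ := by
    intro f
    refine ckf_le_of_sq_le_sq (norm_nonneg _) (by positivity) ?_
    have h1 : ∫ x, ‖(⟪ψ x, f⟫ : ℂ)‖ ^ 2 ∂μ = ‖L f‖ ^ 2 :=
      ckf_norm_sq (L f) _ (MemLp.coeFn_toLp (hmem f))
    have h2 : ∫ x, ‖(⟪ψ x, f⟫ : ℂ)‖ ^ 2 ∂μ = ∫ x, ‖(⟪f, ψ x⟫ : ℂ)‖ ^ 2 ∂μ :=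
      integral_congr_ae (Eventually.of_forall fun x => by
        show ‖(⟪ψ x, f⟫ : ℂ)‖ ^ 2 = ‖(⟪f, ψ x⟫ : ℂ)‖ ^ 2
        rw [norm_inner_symm])
    have h3 : ‖L f‖ ^ 2 ≤ β * ‖f‖ ^ 2 := by
      rw [← h1, h2]; exact hub f
    calc ‖L f‖ ^ 2 ≤ β * ‖f‖ ^ 2 := h3
    _ = (Real.sqrt β * ‖f‖) ^ 2 := by rw [mul_pow, Real.sq_sqrt hβ]
  refine ⟨L.mkContinuous (Real.sqrt β) hbound, fun f => ?_⟩
  exact MemLp.coeFn_toLp (hmem f)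

end CKFaux

set_option maxHeartbeats 1000000

/-- Characterizations of continuous `K`-frames, `K ∈ B(J, H)`, via the synthesis
operator `C_ψ*`, the frame operator `S_ψ = C_ψ* C_ψ`, and its square root. A bounded
operator `C : H → L²(X, μ)` represents the analysis operator if `C f = (x ↦ ⟪ψ x, f⟫)`
a.e. for every `f`; then `C* ` is the synthesis operator. Statement (v) is expressed via
a positive operator `S` with `S ∘ S = S_ψ`, i.e. `S = S_ψ^{1/2}`. -/
theorem cont_K_frame_characterizations
    {J H : Type*}
    [NormedAddCommGroup J] [InnerProductSpace ℂ J] [CompleteSpace J]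
    [NormedAddCommGroup H] [InnerProductSpace ℂ H] [CompleteSpace H]
    {X : Type*} [MeasurableSpace X] (μ : Measure X) [SigmaFinite μ]
    (K : J →L[ℂ] H) (ψ : X → H)
    (hmeas : ∀ h : H, Measurable fun x => (⟪h, ψ x⟫ : ℂ)) :
    -- (i) ψ is a continuous K-frame
    ((∃ α > (0 : ℝ), ∃ β > (0 : ℝ), ∀ h : H,
        MemLp (fun x => (⟪h, ψ x⟫ : ℂ)) 2 μ ∧
        α * ‖ContinuousLinearMap.adjoint K h‖ ^ 2 ≤ ∫ x, ‖(⟪h, ψ x⟫ : ℂ)‖ ^ 2 ∂μ ∧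
        ∫ x, ‖(⟪h, ψ x⟫ : ℂ)‖ ^ 2 ∂μ ≤ β * ‖h‖ ^ 2) ↔
      -- (ii) C_ψ* bounded and R(K) ⊆ R(C_ψ*)
      (∃ C : H →L[ℂ] Lp ℂ 2 μ,
        (∀ f : H, (C f : X → ℂ) =ᵐ[μ] fun x => (⟪ψ x, f⟫ : ℂ)) ∧
        Set.range K ⊆ Set.range (ContinuousLinearMap.adjoint C))) ∧
    -- (i) ↔ (iii) : K = C_ψ* M
    ((∃ α > (0 : ℝ), ∃ β > (0 : ℝ), ∀ h : H,
        MemLp (fun x => (⟪h, ψ x⟫ : ℂ)) 2 μ ∧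
        α * ‖ContinuousLinearMap.adjoint K h‖ ^ 2 ≤ ∫ x, ‖(⟪h, ψ x⟫ : ℂ)‖ ^ 2 ∂μ ∧
        ∫ x, ‖(⟪h, ψ x⟫ : ℂ)‖ ^ 2 ∂μ ≤ β * ‖h‖ ^ 2) ↔
      (∃ C : H →L[ℂ] Lp ℂ 2 μ,
        (∀ f : H, (C f : X → ℂ) =ᵐ[μ] fun x => (⟪ψ x, f⟫ : ℂ)) ∧
        ∃ M : J →L[ℂ] Lp ℂ 2 μ, K = (ContinuousLinearMap.adjoint C).comp M)) ∧
    -- (i) ↔ (iv) : ψ Bessel and S_ψ ≥ α K K*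
    ((∃ α > (0 : ℝ), ∃ β > (0 : ℝ), ∀ h : H,
        MemLp (fun x => (⟪h, ψ x⟫ : ℂ)) 2 μ ∧
        α * ‖ContinuousLinearMap.adjoint K h‖ ^ 2 ≤ ∫ x, ‖(⟪h, ψ x⟫ : ℂ)‖ ^ 2 ∂μ ∧
        ∫ x, ‖(⟪h, ψ x⟫ : ℂ)‖ ^ 2 ∂μ ≤ β * ‖h‖ ^ 2) ↔
      ((∃ β > (0 : ℝ), ∀ h : H,
          MemLp (fun x => (⟪h, ψ x⟫ : ℂ)) 2 μ ∧
          ∫ x, ‖(⟪h, ψ x⟫ : ℂ)‖ ^ 2 ∂μ ≤ β * ‖h‖ ^ 2) ∧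
        ∃ C : H →L[ℂ] Lp ℂ 2 μ,
          (∀ f : H, (C f : X → ℂ) =ᵐ[μ] fun x => (⟪ψ x, f⟫ : ℂ)) ∧
          ∃ α > (0 : ℝ), ∀ f : H,
            α * ‖ContinuousLinearMap.adjoint K f‖ ^ 2 ≤
              RCLike.re (⟪f, ((ContinuousLinearMap.adjoint C).comp C) f⟫ : ℂ))) ∧
    -- (i) ↔ (v) : K = S_ψ^{1/2} U
    ((∃ α > (0 : ℝ), ∃ β > (0 : ℝ), ∀ h : H,
        MemLp (fun x => (⟪h, ψ x⟫ : ℂ)) 2 μ ∧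
        α * ‖ContinuousLinearMap.adjoint K h‖ ^ 2 ≤ ∫ x, ‖(⟪h, ψ x⟫ : ℂ)‖ ^ 2 ∂μ ∧
        ∫ x, ‖(⟪h, ψ x⟫ : ℂ)‖ ^ 2 ∂μ ≤ β * ‖h‖ ^ 2) ↔
      (∃ C : H →L[ℂ] Lp ℂ 2 μ,
        (∀ f : H, (C f : X → ℂ) =ᵐ[μ] fun x => (⟪ψ x, f⟫ : ℂ)) ∧
        ∃ S : H →L[ℂ] H, S.IsPositive ∧
          S.comp S = (ContinuousLinearMap.adjoint C).comp C ∧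
          ∃ U : J →L[ℂ] H, K = S.comp U)) := by
  classical
  -- the integral of the frame coefficients equals the squared norm of `C h`
  have key1 : ∀ C : H →L[ℂ] Lp ℂ 2 μ,
      (∀ f : H, (C f : X → ℂ) =ᵐ[μ] fun x => (⟪ψ x, f⟫ : ℂ)) →
      ∀ h : H, ∫ x, ‖(⟪h, ψ x⟫ : ℂ)‖ ^ 2 ∂μ = ‖C h‖ ^ 2 := by
    intro C hC h
    rw [← ckf_norm_sq (C h) _ (hC h)]
    refine integral_congr_ae (Eventually.of_forall fun x => ?_)
    show ‖(⟪h, ψ x⟫ : ℂ)‖ ^ 2 = ‖(⟪ψ x, h⟫ : ℂ)‖ ^ 2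
    rw [norm_inner_symm]
  -- membership in L² from the existence of `C`
  have key2 : ∀ C : H →L[ℂ] Lp ℂ 2 μ,
      (∀ f : H, (C f : X → ℂ) =ᵐ[μ] fun x => (⟪ψ x, f⟫ : ℂ)) →
      ∀ h : H, MemLp (fun x => (⟪h, ψ x⟫ : ℂ)) 2 μ := by
    intro C hC h
    have h1 : MemLp (fun x => (⟪ψ x, h⟫ : ℂ)) 2 μ := (Lp.memLp (C h)).ae_eq (hC h)
    exact h1.congr_norm (hmeas h).aestronglyMeasurable
      (Eventually.of_forall fun x => norm_inner_symm _ _)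
  -- conjugate membership
  have keyM : ∀ f : H, MemLp (fun x => (⟪f, ψ x⟫ : ℂ)) 2 μ →
      MemLp (fun x => (⟪ψ x, f⟫ : ℂ)) 2 μ := by
    intro f hf
    refine hf.congr_norm ?_ (Eventually.of_forall fun x => norm_inner_symm _ _)
    have hm : Measurable fun x => (⟪ψ x, f⟫ : ℂ) := by
      have he : (fun x => (⟪ψ x, f⟫ : ℂ)) = fun x => star (⟪f, ψ x⟫ : ℂ) := by
        funext x
        rw [RCLike.star_def, inner_conj_symm]
      rw [he]
      exact continuous_star.measurable.comp (hmeas f)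
    exact hm.aestronglyMeasurable
  -- construction of (i) from a bound on `K*` through `C`
  have mkI : ∀ C : H →L[ℂ] Lp ℂ 2 μ,
      (∀ f : H, (C f : X → ℂ) =ᵐ[μ] fun x => (⟪ψ x, f⟫ : ℂ)) →
      ∀ m : ℝ, (∀ h : H, ‖ContinuousLinearMap.adjoint K h‖ ≤ m * ‖C h‖) →
      (∃ α > (0 : ℝ), ∃ β > (0 : ℝ), ∀ h : H,
        MemLp (fun x => (⟪h, ψ x⟫ : ℂ)) 2 μ ∧
        α * ‖ContinuousLinearMap.adjoint K h‖ ^ 2 ≤ ∫ x, ‖(⟪h, ψ x⟫ : ℂ)‖ ^ 2 ∂μ ∧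
        ∫ x, ‖(⟪h, ψ x⟫ : ℂ)‖ ^ 2 ∂μ ≤ β * ‖h‖ ^ 2) := by
    intro C hC m hm
    refine ⟨(m ^ 2 + 1)⁻¹, by positivity, ‖C‖ ^ 2 + 1, by positivity, fun h => ?_⟩
    refine ⟨key2 C hC h, ?_, ?_⟩
    · rw [key1 C hC h, inv_mul_le_iff₀ (by positivity)]
      have h2 : ‖ContinuousLinearMap.adjoint K h‖ ^ 2 ≤ (m * ‖C h‖) ^ 2 :=
        pow_le_pow_left₀ (norm_nonneg _) (hm h) 2
      nlinarith [sq_nonneg (‖C h‖)]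
    · rw [key1 C hC h]
      have h2 : ‖C h‖ ^ 2 ≤ (‖C‖ * ‖h‖) ^ 2 :=
        pow_le_pow_left₀ (norm_nonneg _) (C.le_opNorm h) 2
      nlinarith [sq_nonneg (‖h‖)]
  -- the lower frame bound through `C`
  have hLow : ∀ C : H →L[ℂ] Lp ℂ 2 μ,
      (∀ f : H, (C f : X → ℂ) =ᵐ[μ] fun x => (⟪ψ x, f⟫ : ℂ)) →
      (∃ α > (0 : ℝ), ∃ β > (0 : ℝ), ∀ h : H,
        MemLp (fun x => (⟪h, ψ x⟫ : ℂ)) 2 μ ∧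
        α * ‖ContinuousLinearMap.adjoint K h‖ ^ 2 ≤ ∫ x, ‖(⟪h, ψ x⟫ : ℂ)‖ ^ 2 ∂μ ∧
        ∫ x, ‖(⟪h, ψ x⟫ : ℂ)‖ ^ 2 ∂μ ≤ β * ‖h‖ ^ 2) →
      ∃ α > (0 : ℝ), ∀ h : H,
        α * ‖ContinuousLinearMap.adjoint K h‖ ^ 2 ≤ ‖C h‖ ^ 2 := by
    rintro C hC ⟨α, hα, β, hβ, hh⟩
    exact ⟨α, hα, fun h => by rw [← key1 C hC h]; exact (hh h).2.1⟩
  -- existence of `C` from (i)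
  have hIC : (∃ α > (0 : ℝ), ∃ β > (0 : ℝ), ∀ h : H,
        MemLp (fun x => (⟪h, ψ x⟫ : ℂ)) 2 μ ∧
        α * ‖ContinuousLinearMap.adjoint K h‖ ^ 2 ≤ ∫ x, ‖(⟪h, ψ x⟫ : ℂ)‖ ^ 2 ∂μ ∧
        ∫ x, ‖(⟪h, ψ x⟫ : ℂ)‖ ^ 2 ∂μ ≤ β * ‖h‖ ^ 2) →
      ∃ C : H →L[ℂ] Lp ℂ 2 μ, ∀ f : H, (C f : X → ℂ) =ᵐ[μ] fun x => (⟪ψ x, f⟫ : ℂ) := by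
    rintro ⟨α, hα, β, hβ, hh⟩
    exact ckf_exists_C ψ β hβ.le (fun f => keyM f (hh f).1) fun h => (hh h).2.2
  -- `C* C` is positive
  have hposCC : ∀ C : H →L[ℂ] Lp ℂ 2 μ,
      ((ContinuousLinearMap.adjoint C).comp C).IsPositive := by
    intro C
    constructor
    · exact (ContinuousLinearMap.isPositive_adjoint_comp_self C).1
    · intro x
      show 0 ≤ RCLike.re (⟪ContinuousLinearMap.adjoint C (C x), x⟫ : ℂ)
      rw [ContinuousLinearMap.adjoint_inner_left, inner_self_eq_norm_sq]
      positivity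
  -- `re ⟪f, C* C f⟫ = ‖C f‖²`
  have keyE : ∀ (C : H →L[ℂ] Lp ℂ 2 μ) (f : H),
      RCLike.re (⟪f, ((ContinuousLinearMap.adjoint C).comp C) f⟫ : ℂ) = ‖C f‖ ^ 2 := by
    intro C f
    have h1 : (⟪f, ((ContinuousLinearMap.adjoint C).comp C) f⟫ : ℂ) = ⟪C f, C f⟫ := by
      show (⟪f, ContinuousLinearMap.adjoint C (C f)⟫ : ℂ) = _
      rw [ContinuousLinearMap.adjoint_inner_right]
    rw [h1, inner_self_eq_norm_sq]
  -- the square root of the frame operator has the same "norms" as `C`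
  have keyS : ∀ (S : H →L[ℂ] H) (C : H →L[ℂ] Lp ℂ 2 μ), S.IsPositive →
      S.comp S = (ContinuousLinearMap.adjoint C).comp C → ∀ h : H, ‖S h‖ ^ 2 = ‖C h‖ ^ 2 := by
    intro S C hS hSS h
    have hadj : ContinuousLinearMap.adjoint S = S := by
      rw [← ContinuousLinearMap.star_eq_adjoint]; exact hS.isSelfAdjoint
    have e1 : S (S h) = ContinuousLinearMap.adjoint S (S h) := by rw [hadj]
    have h1 : (⟪S h, S h⟫ : ℂ) = ⟪h, ((ContinuousLinearMap.adjoint C).comp C) h⟫ := by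
      rw [← hSS]
      show (⟪S h, S h⟫ : ℂ) = ⟪h, S (S h)⟫
      rw [e1, ContinuousLinearMap.adjoint_inner_right]
    have h2 := congrArg RCLike.re h1
    rw [inner_self_eq_norm_sq] at h2
    rw [h2, keyE]
  refine ⟨⟨?_, ?_⟩, ⟨?_, ?_⟩, ⟨?_, ?_⟩, ⟨?_, ?_⟩⟩
  -- (i) → (ii)
  · intro hi
    obtain ⟨C, hC⟩ := hIC hi
    obtain ⟨α, hα, hlow⟩ := hLow C hC hi
    refine ⟨C, hC, ckf_range_of_bound (ContinuousLinearMap.adjoint C) K α hα fun h => ?_⟩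
    rw [ContinuousLinearMap.adjoint_adjoint]
    exact hlow h
  -- (ii) → (i)
  · rintro ⟨C, hC, hr⟩
    obtain ⟨M, hM⟩ := ckf_douglas (ContinuousLinearMap.adjoint C) K hr
    refine mkI C hC ‖ContinuousLinearMap.adjoint M‖ fun h => ?_
    have h1 : ContinuousLinearMap.adjoint K h = ContinuousLinearMap.adjoint M (C h) := by
      rw [hM, ContinuousLinearMap.adjoint_comp, ContinuousLinearMap.adjoint_adjoint]; rfl
    rw [h1]
    exact (ContinuousLinearMap.adjoint M).le_opNorm (C h)
  -- (i) → (iii)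
  · intro hi
    obtain ⟨C, hC⟩ := hIC hi
    obtain ⟨α, hα, hlow⟩ := hLow C hC hi
    obtain ⟨M, hM⟩ := ckf_factor (ContinuousLinearMap.adjoint C) K α hα fun h => by
      rw [ContinuousLinearMap.adjoint_adjoint]; exact hlow h
    exact ⟨C, hC, M, hM⟩
  -- (iii) → (i)
  · rintro ⟨C, hC, M, hM⟩
    refine mkI C hC ‖ContinuousLinearMap.adjoint M‖ fun h => ?_
    have h1 : ContinuousLinearMap.adjoint K h = ContinuousLinearMap.adjoint M (C h) := by
      rw [hM, ContinuousLinearMap.adjoint_comp, ContinuousLinearMap.adjoint_adjoint]; rfl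
    rw [h1]
    exact (ContinuousLinearMap.adjoint M).le_opNorm (C h)
  -- (i) → (iv)
  · intro hi
    obtain ⟨C, hC⟩ := hIC hi
    obtain ⟨α, hα, hlow⟩ := hLow C hC hi
    refine ⟨⟨‖C‖ ^ 2 + 1, by positivity, fun h => ⟨key2 C hC h, ?_⟩⟩, C, hC, α, hα, fun f => ?_⟩
    · rw [key1 C hC h]
      have h2 : ‖C h‖ ^ 2 ≤ (‖C‖ * ‖h‖) ^ 2 :=
        pow_le_pow_left₀ (norm_nonneg _) (C.le_opNorm h) 2
      nlinarith [sq_nonneg (‖h‖)]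
    · rw [keyE C f]
      exact hlow f
  -- (iv) → (i)
  · rintro ⟨⟨β, hβ, hBes⟩, C, hC, α, hα, hlow⟩
    refine ⟨α, hα, β, hβ, fun h => ⟨(hBes h).1, ?_, (hBes h).2⟩⟩
    rw [key1 C hC h, ← keyE C h]
    exact hlow h
  -- (i) → (v)
  · intro hi
    obtain ⟨C, hC⟩ := hIC hi
    obtain ⟨α, hα, hlow⟩ := hLow C hC hi
    obtain ⟨S, hSpos, hSS⟩ := ckf_sqrt ((ContinuousLinearMap.adjoint C).comp C) (hposCC C)
    have hSnorm : ∀ h : H, ‖S h‖ ^ 2 = ‖C h‖ ^ 2 := keyS S C hSpos hSS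
    have hadjS : ContinuousLinearMap.adjoint S = S := by
      rw [← ContinuousLinearMap.star_eq_adjoint]; exact hSpos.isSelfAdjoint
    obtain ⟨U, hU⟩ := ckf_factor S K α hα fun h => by
      rw [hadjS, hSnorm]; exact hlow h
    exact ⟨C, hC, S, hSpos, hSS, U, hU⟩
  -- (v) → (i)
  · rintro ⟨C, hC, S, hSpos, hSS, U, hU⟩
    have hSnorm := keyS S C hSpos hSS
    have hadjS : ContinuousLinearMap.adjoint S = S := by
      rw [← ContinuousLinearMap.star_eq_adjoint]; exact hSpos.isSelfAdjoint
    refine mkI C hC ‖ContinuousLinearMap.adjoint U‖ fun h => ?_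
    have h1 : ContinuousLinearMap.adjoint K h = ContinuousLinearMap.adjoint U (S h) := by
      rw [hU, ContinuousLinearMap.adjoint_comp, hadjS]; rfl
    have h2 : ‖S h‖ = ‖C h‖ :=
      le_antisymm (ckf_le_of_sq_le_sq (norm_nonneg _) (norm_nonneg _) (hSnorm h).le)
        (ckf_le_of_sq_le_sq (norm_nonneg _) (norm_nonneg _) (hSnorm h).ge)
    rw [h1]
    calc ‖ContinuousLinearMap.adjoint U (S h)‖ ≤ ‖ContinuousLinearMap.adjoint U‖ * ‖S h‖ :=
          (ContinuousLinearMap.adjoint U).le_opNorm (S h)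
    _ = ‖ContinuousLinearMap.adjoint U‖ * ‖C h‖ := by rw [h2]
end

section
/- Let K ∈ B(J,H), ψ a continuous K-frame for H, and φ : X → J a Bessel K-dual of ψ (so ⟨Kf,h⟩ = ∫_X ⟨f,φ_x⟩_J ⟨ψ_x,h⟩_H dμ(x) for all f ∈ J, h ∈ H). Then φ is a continuous atomic system for K*: it is Bessel and ⟨K*h,f⟩_J = ∫_X ⟨h,ψ_x⟩_H ⟨φ_x,f⟩_J dμ(x) for all h ∈ H, f ∈ J, with coefficient function x ↦ ⟨h,ψ_x⟩ of L²-norm bounded by √β ‖h‖. -/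
open MeasureTheory Filter Topology
open scoped ComplexInnerProductSpace

/-- If `ψ` is a continuous `K`-frame for `H` and `φ : X → J` is a Bessel `K`-dual of `ψ`,
then `φ` is a continuous atomic system for `K*`: it is Bessel and
`⟨K* h, f⟩ = ∫ ⟨h, ψ_x⟩ ⟨φ_x, f⟩ dμ` for all `h ∈ H`, `f ∈ J`, with coefficient function
`x ↦ ⟨h, ψ_x⟩` of `L²`-norm at most `√β ‖h‖`. (Paper inner products are `⟪·,·⟫` with
swapped arguments.) -/
theorem bessel_dual_atomic_system_for_adjoint
    {J H : Type*}
    [NormedAddCommGroup J] [InnerProductSpace ℂ J] [CompleteSpace J]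
    [NormedAddCommGroup H] [InnerProductSpace ℂ H] [CompleteSpace H]
    {X : Type*} [MeasurableSpace X] (μ : Measure X)
    (K : J →L[ℂ] H) (ψ : X → H) (φ : X → J)
    (hψmeas : ∀ h : H, Measurable fun x => (⟪h, ψ x⟫ : ℂ))
    (α β : ℝ) (hα : 0 < α) (hβ : 0 < β)
    (hframe : ∀ h : H, MemLp (fun x => (⟪h, ψ x⟫ : ℂ)) 2 μ ∧
      α * ‖ContinuousLinearMap.adjoint K h‖ ^ 2 ≤ ∫ x, ‖(⟪h, ψ x⟫ : ℂ)‖ ^ 2 ∂μ ∧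
      ∫ x, ‖(⟪h, ψ x⟫ : ℂ)‖ ^ 2 ∂μ ≤ β * ‖h‖ ^ 2)
    (γ : ℝ) (hγ : 0 < γ)
    (hφBessel : ∀ f : J, MemLp (fun x => (⟪f, φ x⟫ : ℂ)) 2 μ ∧
      ∫ x, ‖(⟪f, φ x⟫ : ℂ)‖ ^ 2 ∂μ ≤ γ * ‖f‖ ^ 2)
    (hdual : ∀ f : J, ∀ h : H,
      (⟪h, K f⟫ : ℂ) = ∫ x, (⟪φ x, f⟫ : ℂ) * (⟪h, ψ x⟫ : ℂ) ∂μ) :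
    ∀ h : H,
      MemLp (fun x => (⟪h, ψ x⟫ : ℂ)) 2 μ ∧
      Real.sqrt (∫ x, ‖(⟪h, ψ x⟫ : ℂ)‖ ^ 2 ∂μ) ≤ Real.sqrt β * ‖h‖ ∧
      ∀ f : J, (⟪f, ContinuousLinearMap.adjoint K h⟫ : ℂ) =
        ∫ x, (⟪ψ x, h⟫ : ℂ) * (⟪f, φ x⟫ : ℂ) ∂μ := by
  intro h
  obtain ⟨hmem, hlow, hup⟩ := hframe h
  refine ⟨hmem, ?_, ?_⟩
  · calc Real.sqrt (∫ x, ‖(⟪h, ψ x⟫ : ℂ)‖ ^ 2 ∂μ) ≤ Real.sqrt (β * ‖h‖ ^ 2) :=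
        Real.sqrt_le_sqrt hup
      _ = Real.sqrt β * ‖h‖ := by
        rw [Real.sqrt_mul hβ.le, Real.sqrt_sq (norm_nonneg h)]
  · intro f
    have h1 : (⟪f, ContinuousLinearMap.adjoint K h⟫ : ℂ) = starRingEnd ℂ (⟪h, K f⟫ : ℂ) := by
      rw [← inner_conj_symm, ContinuousLinearMap.adjoint_inner_left]
    rw [h1, hdual f h, ← integral_conj]
    congr 1; ext x
    rw [map_mul, inner_conj_symm, inner_conj_symm, mul_comm]
end
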